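/- arXiv:1011.4749 — 12 statements merged into one kernel-verified Lean document; each statement's English description precedes it below -/
import Mathlib

section
/- Let G be a connected graph (possibly infinite). A set B of edges of G is a bond (a minimal non-empty edge cut) if and only if B is minimal with the property of meeting the edge set of every spanning tree of G. -/
variable {V : Type*}

/-- The cut of a graph `G` determined by a vertex set `A`: all edges of `G` with
one endvertex in `A` and the other outside `A`. -/
def cutEdges (G : SimpleGraph V) (A : Set V) : Set (Sym2 V) :=
  {e | e ∈ G.edgeSet ∧ ∃ u v : V, e = s(u, v) ∧ u ∈ A ∧ v ∉ A}

/-- A bond of `G`: a minimal non-empty cut. -/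
def IsBond (G : SimpleGraph V) (B : Set (Sym2 V)) : Prop :=
  Minimal (fun D => D.Nonempty ∧ ∃ A : Set V, D = cutEdges G A) B

/-- A spanning tree of `G`: a spanning subgraph that is connected and acyclic. -/
def IsSpanningTree (G : SimpleGraph V) (T : G.Subgraph) : Prop :=
  T.IsSpanning ∧ T.Connected ∧ T.coe.IsAcyclic

open SimpleGraph

/-- Every walk from inside `A` to outside `A` crosses the boundary of `A`. -/
private lemma walk_crossing {W : Type*} {H : SimpleGraph W} {A : Set W} {u v : W}
    (p : H.Walk u v) (hu : u ∈ A) (hv : v ∉ A) :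
    ∃ x y, H.Adj x y ∧ x ∈ A ∧ y ∉ A := by
  induction p with
  | nil => exact absurd hu hv
  | @cons a b c h q ih =>
    by_cases hb : b ∈ A
    · exact ih hb hv
    · exact ⟨a, b, h, hu, hb⟩

private lemma cutEdges_subset (G : SimpleGraph V) (A : Set V) : cutEdges G A ⊆ G.edgeSet :=
  fun _ he => he.1

/-- A cut with both sides inhabited meets every spanning tree. -/
private lemma spanningTree_meets_cut {G : SimpleGraph V} {T : G.Subgraph}
    (hT : IsSpanningTree G T) {A : Set V} {u v : V} (hu : u ∈ A) (hv : v ∉ A) :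
    (cutEdges G A ∩ T.edgeSet).Nonempty := by
  obtain ⟨hs, hc, -⟩ := hT
  obtain ⟨p⟩ := (Subgraph.connected_iff'.mp hc).preconnected ⟨u, hs u⟩ ⟨v, hs v⟩
  obtain ⟨x, y, hxy, hx, hy⟩ :=
    walk_crossing (A := {z : T.verts | (z : V) ∈ A}) p hu hv
  have hadj : T.Adj x.1 y.1 := hxy
  exact ⟨s(x.1, y.1), ⟨T.adj_sub hadj, x.1, y.1, rfl, hx, hy⟩, Subgraph.mem_edgeSet.mpr hadj⟩

private lemma cut_nonempty {G : SimpleGraph V} (hG : G.Preconnected) {A : Set V} {a b : V}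
    (ha : a ∈ A) (hb : b ∉ A) : (cutEdges G A).Nonempty := by
  obtain ⟨p⟩ := hG a b
  obtain ⟨x, y, hxy, hx, hy⟩ := walk_crossing p ha hb
  exact ⟨s(x, y), (G.mem_edgeSet).mpr hxy, x, y, rfl, hx, hy⟩

/-- The cut determined by a reachability-closed set after deleting `S` lies inside `S`. -/
private lemma cut_closure_subset {G : SimpleGraph V} (S : Set (Sym2 V)) (a : V) :
    cutEdges G {w | (G.deleteEdges S).Reachable a w} ⊆ S := by
  rintro f ⟨hfE, x, y, rfl, hx, hy⟩
  by_contra hfS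
  exact hy (hx.trans (SimpleGraph.Adj.reachable
    ((SimpleGraph.deleteEdges_adj).mpr ⟨G.mem_edgeSet.mp hfE, hfS⟩)))

/-- Every connected graph has a spanning tree (as a simple graph below it). -/
private lemma exists_isTree_le {G : SimpleGraph V} (hG : G.Connected) :
    ∃ H : SimpleGraph V, H ≤ G ∧ H.IsTree := by
  have hzorn : ∀ c ⊆ {H : SimpleGraph V | H ≤ G ∧ H.IsAcyclic}, IsChain (· ≤ ·) c →
      ∃ ub ∈ {H : SimpleGraph V | H ≤ G ∧ H.IsAcyclic}, ∀ z ∈ c, z ≤ ub := by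
    intro c hcs hchain
    rcases c.eq_empty_or_nonempty with rfl | hcne
    · exact ⟨⊥, ⟨bot_le, isAcyclic_bot⟩, by simp⟩
    refine ⟨sSup c, ⟨sSup_le fun H hH => (hcs hH).1, ?_⟩, fun z hz => le_sSup hz⟩
    intro v q hq
    have key : ∀ l : List (Sym2 V), (∀ e ∈ l, e ∈ (sSup c).edgeSet) →
        ∃ H ∈ c, ∀ e ∈ l, e ∈ H.edgeSet := by
      intro l
      induction l with
      | nil => exact fun _ => ⟨hcne.choose, hcne.choose_spec, by simp⟩
      | cons e l ih =>
        intro hl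
        obtain ⟨H₁, hH₁, h₁⟩ := ih fun f hf => hl f (List.mem_cons_of_mem _ hf)
        have he : e ∈ (sSup c).edgeSet := hl e List.mem_cons_self
        obtain ⟨H₂, hH₂, h₂⟩ : ∃ H ∈ c, e ∈ H.edgeSet := by
          induction e using Sym2.ind with
          | _ x y =>
            rw [(sSup c).mem_edgeSet, sSup_adj] at he
            obtain ⟨H₂, hH₂, h₂⟩ := he
            exact ⟨H₂, hH₂, H₂.mem_edgeSet.mpr h₂⟩
        rcases eq_or_ne H₁ H₂ with rfl | hne
        · exact ⟨H₁, hH₁, fun f hf => by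
            rcases List.mem_cons.mp hf with rfl | hf
            exacts [h₂, h₁ f hf]⟩
        rcases hchain hH₁ hH₂ hne with hle | hle
        · exact ⟨H₂, hH₂, fun f hf => by
            rcases List.mem_cons.mp hf with rfl | hf
            exacts [h₂, edgeSet_mono hle (h₁ f hf)]⟩
        · exact ⟨H₁, hH₁, fun f hf => by
            rcases List.mem_cons.mp hf with rfl | hf
            exacts [edgeSet_mono hle h₂, h₁ f hf]⟩
    obtain ⟨H, hHc, hHe⟩ := key q.edges fun e he => q.edges_subset_edgeSet he
    exact (hcs hHc).2 (q.transfer H hHe) (hq.transfer hHe)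
  obtain ⟨H, hH⟩ := zorn_le₀ {H : SimpleGraph V | H ≤ G ∧ H.IsAcyclic} hzorn
  have hadj : ∀ {x y : V}, G.Adj x y → H.Reachable x y := by
    intro x y hxy
    by_contra hr
    have hxyH : ¬ H.Adj x y := fun h => hr h.reachable
    set H' := H ⊔ fromEdgeSet {s(x, y)} with hH'def
    have hadjxy : H'.Adj x y := by
      rw [hH'def, sup_adj, fromEdgeSet_adj]
      exact Or.inr ⟨rfl, hxy.ne⟩
    have hacy : H'.IsAcyclic := by
      intro v q hq
      by_cases hmem : s(x, y) ∈ q.edges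
      · have hbridge : H'.IsBridge s(x, y) := by
          rw [isBridge_iff]
          refine fun hreach => hr (hreach.mono ?_)
          intro a b hab
          rw [deleteEdges_adj, hH'def, sup_adj] at hab
          rcases hab with ⟨h1 | h1, h2⟩
          · exact h1
          · exact absurd h1.1 h2
        exact (isBridge_iff_forall_cycle_notMem hadjxy).mp hbridge q hq hmem
      · have hsub : ∀ e ∈ q.edges, e ∈ H.edgeSet := by
          intro e he
          have heE : e ∈ H'.edgeSet := q.edges_subset_edgeSet he
          rw [hH'def, edgeSet_sup] at heE
          rcases heE with h | h
          · exact h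
          · rw [edgeSet_fromEdgeSet] at h
            exact absurd (Set.mem_singleton_iff.mp h.1 ▸ he) hmem
        exact hH.prop.2 (q.transfer H hsub) (hq.transfer hsub)
    have hle : H' ≤ G := by
      refine sup_le hH.prop.1 ?_
      intro a b hab
      rw [fromEdgeSet_adj] at hab
      obtain ⟨h1, -⟩ := hab
      rw [Set.mem_singleton_iff, Sym2.eq_iff] at h1
      rcases h1 with ⟨rfl, rfl⟩ | ⟨rfl, rfl⟩
      · exact hxy
      · exact hxy.symm
    have hH'H : H' ≤ H := hH.2 ⟨hle, hacy⟩ le_sup_left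
    exact hxyH (hH'H hadjxy)
  refine ⟨H, hH.prop.1, ?_, hH.prop.2⟩
  have hVne : Nonempty V := hG.nonempty
  refine ⟨fun u v => ?_⟩
  obtain ⟨p⟩ := hG.preconnected u v
  induction p with
  | nil => exact Reachable.refl _
  | cons h q ih => exact (hadj h).trans ih

/-- A graph isomorphism transports acyclicity. -/
private lemma isAcyclic_of_iso {W W' : Type*} {G : SimpleGraph W} {H : SimpleGraph W'}
    (e : G ≃g H) (h : G.IsAcyclic) : H.IsAcyclic := by
  intro v q hq
  exact h (q.map e.symm.toHom) (hq.map e.symm.toEquiv.injective)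

/-- Turning a spanning tree (as a simple graph) into a subgraph spanning tree. -/
private lemma toSubgraph_isSpanningTree {G H : SimpleGraph V} (hle : H ≤ G) (hH : H.IsTree) :
    IsSpanningTree G ((SimpleGraph.toSubgraph H hle)) ∧ ((SimpleGraph.toSubgraph H hle)).edgeSet = H.edgeSet := by
  have hspan : ((SimpleGraph.toSubgraph H hle)).IsSpanning := toSubgraph.isSpanning H hle
  have hcoe : ((SimpleGraph.toSubgraph H hle)).spanningCoe = H := by
    ext a b; rfl
  have e := ((SimpleGraph.toSubgraph H hle)).spanningCoeEquivCoeOfSpanning hspan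
  refine ⟨⟨hspan, ?_, ?_⟩, ?_⟩
  · rw [Subgraph.connected_iff', ← e.connected_iff, hcoe]
    exact hH.isConnected
  · refine isAcyclic_of_iso e ?_
    rw [hcoe]
    exact hH.IsAcyclic
  · ext f
    induction f using Sym2.ind with
    | _ x y => simp [Subgraph.mem_edgeSet, mem_edgeSet, SimpleGraph.toSubgraph]

/-- Deleting a bond minus one of its edges keeps the graph preconnected. -/
private lemma bond_delete_preconnected {G : SimpleGraph V} (hG : G.Connected)
    {B : Set (Sym2 V)} (hB : IsBond G B) {e : Sym2 V} (he : e ∈ B) :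
    (G.deleteEdges (B \ {e})).Preconnected := by
  intro a b
  by_contra hab
  have hsub : cutEdges G {w | (G.deleteEdges (B \ {e})).Reachable a w} ⊆ B \ {e} :=
    cut_closure_subset _ a
  have hne : (cutEdges G {w | (G.deleteEdges (B \ {e})).Reachable a w}).Nonempty :=
    cut_nonempty hG.preconnected (Reachable.refl a) hab
  have hBsub := hB.2 ⟨hne, _, rfl⟩ (hsub.trans Set.diff_subset)
  exact (hsub (hBsub he)).2 rfl

/-- In a connected graph (possibly infinite), a set `B` of edges is a bond if and only
if `B` is minimal with the property of meeting the edge set of every spanning tree. -/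
theorem isBond_iff_minimal_meets_every_spanningTree (G : SimpleGraph V) (hG : G.Connected)
    (B : Set (Sym2 V)) :
    IsBond G B ↔
      Minimal (fun D => D ⊆ G.edgeSet ∧
        ∀ T : G.Subgraph, IsSpanningTree G T → (D ∩ T.edgeSet).Nonempty) B := by
  have hVne : Nonempty V := hG.nonempty
  have hmeets : ∀ (A : Set V), (cutEdges G A).Nonempty →
      ∀ T : G.Subgraph, IsSpanningTree G T → (cutEdges G A ∩ T.edgeSet).Nonempty := by
    rintro A ⟨f, hfE, x, y, rfl, hx, hy⟩ T hT
    exact spanningTree_meets_cut hT hx hy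
  constructor
  · intro hB
    obtain ⟨⟨hBne, A, hBA⟩, -⟩ := id hB
    subst hBA
    refine ⟨⟨cutEdges_subset G A, hmeets A hBne⟩, ?_⟩
    rintro D ⟨hDE, hDT⟩ hDB
    intro f hf
    by_contra hfD
    have hpre := bond_delete_preconnected hG hB hf
    obtain ⟨H, hle, hTree⟩ := exists_isTree_le ⟨hpre⟩
    obtain ⟨hST, hES⟩ := toSubgraph_isSpanningTree (hle.trans (deleteEdges_le _)) hTree
    obtain ⟨d, hdD, hdT⟩ := hDT _ hST
    have hdH : d ∈ (G.deleteEdges (cutEdges G A \ {f})).edgeSet :=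
      edgeSet_mono hle (hES ▸ hdT)
    rw [edgeSet_deleteEdges] at hdH
    have hdf : d = f := by
      by_contra hdf
      exact hdH.2 ⟨hDB hdD, hdf⟩
    exact hfD (hdf ▸ hdD)
  · rintro ⟨⟨hBE, hBT⟩, hmin⟩
    have hBne : B.Nonempty := by
      obtain ⟨H₀, hle₀, hTree₀⟩ := exists_isTree_le hG
      obtain ⟨hST₀, -⟩ := toSubgraph_isSpanningTree hle₀ hTree₀
      obtain ⟨f, hf, -⟩ := hBT _ hST₀
      exact ⟨f, hf⟩
    obtain ⟨a, b, hab⟩ : ∃ a b : V, ¬(G.deleteEdges B).Reachable a b := by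
      by_contra h
      push_neg at h
      obtain ⟨H, hle, hTree⟩ := exists_isTree_le ⟨fun a b => h a b⟩
      obtain ⟨hST, hES⟩ := toSubgraph_isSpanningTree (hle.trans (deleteEdges_le _)) hTree
      obtain ⟨d, hdB, hdT⟩ := hBT _ hST
      have hdH : d ∈ (G.deleteEdges B).edgeSet := edgeSet_mono hle (hES ▸ hdT)
      rw [edgeSet_deleteEdges] at hdH
      exact hdH.2 hdB
    have hsub : cutEdges G {w | (G.deleteEdges B).Reachable a w} ⊆ B :=
      cut_closure_subset B a
    have hcne : (cutEdges G {w | (G.deleteEdges B).Reachable a w}).Nonempty :=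
      cut_nonempty hG.preconnected (Reachable.refl a) hab
    have hBcut : B ⊆ cutEdges G {w | (G.deleteEdges B).Reachable a w} :=
      hmin ⟨cutEdges_subset G _, hmeets _ hcne⟩ hsub
    refine ⟨⟨hBne, _, Set.Subset.antisymm hBcut hsub⟩, ?_⟩
    rintro D ⟨hDne, A', rfl⟩ hDB
    exact hmin ⟨cutEdges_subset G A', hmeets A' hDne⟩ hDB
end

section
/- Let G be a connected graph and B a set of edges that meets the edge set of every spanning tree of G and is minimal with this property. Then B contains a bond of G. -/
variable {V : Type*}

open SimpleGraph

/-- A walk from inside `A` to outside `A` uses a crossing edge. -/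
lemma exists_crossing_adj {W : Type*} {H : SimpleGraph W} (A : Set W) :
    ∀ {u v : W}, H.Walk u v → u ∈ A → v ∉ A → ∃ x y, H.Adj x y ∧ x ∈ A ∧ y ∉ A := by
  intro u v p
  induction p with
  | nil => intro hu hv; exact absurd hu hv
  | @cons a b c h q ih =>
    intro hu hv
    by_cases hb : b ∈ A
    · exact ih hb hv
    · exact ⟨a, b, h, hu, hb⟩

/-- Every connected graph has a connected acyclic spanning subgraph. -/
lemma exists_tree_le (G : SimpleGraph V) (hG : G.Connected) :
    ∃ M : SimpleGraph V, M ≤ G ∧ M.Connected ∧ M.IsAcyclic := by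
  obtain ⟨M, hM⟩ := zorn_le₀ {H : SimpleGraph V | H ≤ G ∧ H.IsAcyclic} (by
    intro c hcs hc
    rcases c.eq_empty_or_nonempty with rfl | hne
    · exact ⟨⊥, ⟨bot_le, isAcyclic_bot⟩, by simp⟩
    · refine ⟨sSup c, ⟨sSup_le fun H hH => (hcs hH).1, ?_⟩, fun H hH => le_sSup hH⟩
      intro v w hw
      -- all edges of the cycle lie in a single element of the chain
      have key : ∀ l : List (Sym2 V), (∀ e ∈ l, e ∈ (sSup c).edgeSet) →
          ∃ H ∈ c, ∀ e ∈ l, e ∈ H.edgeSet := by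
        intro l
        induction l with
        | nil => exact fun _ => ⟨hne.some, hne.some_mem, by simp⟩
        | cons e l ih =>
          intro h
          obtain ⟨H1, hH1, hl⟩ := ih fun e' he' => h e' (List.mem_cons_of_mem _ he')
          have he : e ∈ (sSup c).edgeSet := h e List.mem_cons_self
          induction e using Sym2.ind with
          | _ a b =>
            rw [mem_edgeSet, sSup_adj] at he
            obtain ⟨H2, hH2, hab⟩ := he
            obtain ⟨H3, hH3, h13, h23⟩ := hc.directedOn H1 hH1 H2 hH2
            exact ⟨H3, hH3, by
              intro e' he'
              rcases List.mem_cons.mp he' with rfl | he'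
              · exact edgeSet_mono h23 hab
              · exact edgeSet_mono h13 (hl e' he')⟩
      obtain ⟨H, hH, hedges⟩ := key w.edges fun e he => w.edges_subset_edgeSet he
      exact (hcs hH).2 (w.transfer H hedges) (hw.transfer hedges))
  haveI : Nonempty V := hG.nonempty
  refine ⟨M, hM.1.1, ⟨?_⟩, hM.1.2⟩
  intro u v
  by_contra hr
  obtain ⟨p⟩ := hG.preconnected u v
  obtain ⟨x, y, hxy, hx, hy⟩ :=
    exists_crossing_adj {z | M.Reachable u z} p (Reachable.refl u) hr
  have hnadj : ¬ M.Adj x y := fun h => hy (hx.trans h.reachable)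
  have hne : x ≠ y := hxy.ne
  have hMR : ¬ M.Reachable x y := fun h => hy ((hx : M.Reachable u x).trans h)
  set M' := M ⊔ SimpleGraph.edge x y with hM'
  have hedgele : SimpleGraph.edge x y ≤ G := by
    intro a b hab
    rw [edge_adj] at hab
    rcases hab.1 with ⟨rfl, rfl⟩ | ⟨rfl, rfl⟩
    · exact hxy
    · exact hxy.symm
  have hM'le : M' ≤ G := sup_le hM.1.1 hedgele
  have hdel : M'.deleteEdges {s(x, y)} ≤ M := by
    intro a b hab
    rw [deleteEdges_adj] at hab
    rcases hab.1 with h | h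
    · exact h
    · exfalso
      rw [edge_adj] at h
      apply hab.2
      rcases h.1 with ⟨rfl, rfl⟩ | ⟨rfl, rfl⟩
      · rfl
      · exact Sym2.eq_swap
  have hbridge : M'.IsBridge s(x, y) := by
    rw [isBridge_iff]
    exact fun h => hMR (h.mono hdel)
  have hacy : M'.IsAcyclic := by
    intro v' c hc
    have hnm := hbridge.notMem_edges_of_isCycle hc
    have hedges : ∀ e ∈ c.edges, e ∈ M.edgeSet := by
      intro e he
      have h1 : e ∈ M'.edgeSet := c.edges_subset_edgeSet he
      rw [hM', edgeSet_sup, edge_edgeSet_of_ne hne] at h1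
      rcases h1 with h1 | h1
      · exact h1
      · exact absurd (h1 ▸ he) hnm
    exact hM.1.2 (c.transfer M hedges) (hc.transfer hedges)
  have := hM.2 ⟨hM'le, hacy⟩ le_sup_left
  exact hnadj (this (by rw [hM', sup_adj, edge_adj]; exact Or.inr ⟨Or.inl ⟨rfl, rfl⟩, hne⟩))

lemma toSubgraph_isSpanningTree_s3 {G M : SimpleGraph V} (h : M ≤ G) (hc : M.Connected)
    (ha : M.IsAcyclic) : IsSpanningTree G (G.toSubgraph M h) := by
  set T := G.toSubgraph M h with hT
  have hsp : T.IsSpanning := SimpleGraph.toSubgraph.isSpanning M h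
  have hiso : T.spanningCoe ≃g T.coe := T.spanningCoeEquivCoeOfSpanning hsp
  have hMc : T.spanningCoe = M := rfl
  refine ⟨hsp, ⟨hiso.connected_iff.mp (hMc ▸ hc)⟩, ?_⟩
  intro v c hcyc
  have : (c.map hiso.symm.toHom).IsCycle := hcyc.map hiso.symm.toEquiv.injective
  exact ha _ this

/-- Every spanning tree meets every nonempty-crossed cut. -/
lemma cut_meets {G : SimpleGraph V} (A : Set V) {u v : V} (hu : u ∈ A) (hv : v ∉ A)
    (T : G.Subgraph) (hT : IsSpanningTree G T) : (cutEdges G A ∩ T.edgeSet).Nonempty := by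
  obtain ⟨hsp, hconn, -⟩ := hT
  obtain ⟨p⟩ := hconn.coe ⟨u, hsp u⟩ ⟨v, hsp v⟩
  obtain ⟨x, y, hxy, hx, hy⟩ := exists_crossing_adj {z : T.verts | (z : V) ∈ A} p hu hv
  have hadj : T.Adj x y := hxy
  refine ⟨s(x, y), ⟨hadj.adj_sub, x, y, rfl, hx, hy⟩, SimpleGraph.Subgraph.mem_edgeSet.mpr hadj⟩

/-- If `G` is connected and `B` is a set of edges that meets the edge set of every
spanning tree of `G` and is minimal with this property, then `B` contains a bond of `G`. -/
theorem minimal_meets_every_spanningTree_contains_bond (G : SimpleGraph V) (hG : G.Connected)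
    (B : Set (Sym2 V))
    (hB : Minimal (fun D => D ⊆ G.edgeSet ∧
      ∀ T : G.Subgraph, IsSpanningTree G T → (D ∩ T.edgeSet).Nonempty) B) :
    ∃ D : Set (Sym2 V), D ⊆ B ∧ IsBond G D := by
  haveI : Nonempty V := hG.nonempty
  -- G minus B is not preconnected
  have hnp : ¬ (G.deleteEdges B).Preconnected := by
    intro hp
    obtain ⟨M, hMle, hMc, hMa⟩ := exists_tree_le (G.deleteEdges B) ⟨hp⟩
    have hMG : M ≤ G := hMle.trans (G.deleteEdges_le B)
    obtain ⟨e, heB, heT⟩ := hB.1.2 _ (toSubgraph_isSpanningTree_s3 hMG hMc hMa)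
    have heM : e ∈ M.edgeSet := by
      induction e using Sym2.ind with
      | _ a b => exact heT
    have := SimpleGraph.edgeSet_mono hMle heM
    rw [SimpleGraph.edgeSet_deleteEdges] at this
    exact this.2 heB
  rw [SimpleGraph.Preconnected] at hnp
  push_neg at hnp
  obtain ⟨u, v, huv⟩ := hnp
  set A : Set V := {z | (G.deleteEdges B).Reachable u z} with hA
  have hu : u ∈ A := SimpleGraph.Reachable.refl u
  have hv : v ∉ A := huv
  have hsub : cutEdges G A ⊆ B := by
    rintro e ⟨he, x, y, rfl, hx, hy⟩
    by_contra heB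
    have : (G.deleteEdges B).Adj x y := by
      rw [SimpleGraph.deleteEdges_adj]
      exact ⟨(SimpleGraph.mem_edgeSet G).mp he, heB⟩
    exact hy ((hx : (G.deleteEdges B).Reachable u x).trans this.reachable)
  have hcutP : (cutEdges G A) ⊆ G.edgeSet ∧
      ∀ T : G.Subgraph, IsSpanningTree G T → ((cutEdges G A) ∩ T.edgeSet).Nonempty :=
    ⟨fun e he => he.1, fun T hT => cut_meets A hu hv T hT⟩
  have hBeq : B = cutEdges G A := le_antisymm (hB.2 hcutP hsub) hsub
  have hBne : B.Nonempty := by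
    obtain ⟨M, hMle, hMc, hMa⟩ := exists_tree_le G hG
    obtain ⟨e, heB, -⟩ := hB.1.2 _ (toSubgraph_isSpanningTree_s3 hMle hMc hMa)
    exact ⟨e, heB⟩
  refine ⟨B, subset_rfl, ⟨hBne, A, hBeq⟩, ?_⟩
  rintro D ⟨⟨e0, he0⟩, A', rfl⟩ hDB
  obtain ⟨-, x, y, rfl, hx, hy⟩ := he0
  exact hB.2 ⟨fun e he => he.1, fun T hT => cut_meets A' hx hy T hT⟩ hDB
end

section
/- For a finite ground set E, a function r : {(A,B) : B ⊆ A ⊆ E} → ℕ satisfies (R1) r(A|B) ≤ |A\B|, (R2) r(A|A∩B) ≥ r(A∪B|B) for all A,B, and (R3) r(A|C) = r(A|B) + r(B|C) for C ⊆ B ⊆ A, if and only if the function R(A) := r(A|∅) is the rank function of a matroid on E and r(A|B) = R(A) − R(B) for all B ⊆ A. -/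
open Finset

/-- `R` is the rank function of a matroid on the finite ground set `α`:
`R ∅ = 0`, unit-increase, submodularity, and `R A ≤ |A|`. -/
def IsMatroidRankFunction {α : Type*} [DecidableEq α] (R : Finset α → ℕ) : Prop :=
  R ∅ = 0 ∧
  (∀ (A : Finset α) (x : α), R A ≤ R (insert x A) ∧ R (insert x A) ≤ R A + 1) ∧
  (∀ A B : Finset α, R (A ∪ B) + R (A ∩ B) ≤ R A + R B) ∧
  (∀ A : Finset α, R A ≤ A.card)

/-- For a finite ground set, a relative rank function `r` satisfies (R1), (R2) and (R3)
if and only if `R A := r A ∅` is the rank function of a matroid and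
`r A B = R A - R B` whenever `B ⊆ A`. -/
theorem relative_rank_axioms_iff_rank_function {α : Type*} [Fintype α] [DecidableEq α]
    (r : Finset α → Finset α → ℕ) :
    ((∀ A B : Finset α, B ⊆ A → r A B ≤ (A \ B).card) ∧
     (∀ A B : Finset α, r (A ∪ B) B ≤ r A (A ∩ B)) ∧
     (∀ A B C : Finset α, C ⊆ B → B ⊆ A → r A C = r A B + r B C)) ↔
    (IsMatroidRankFunction (fun A => r A ∅) ∧
     ∀ A B : Finset α, B ⊆ A → r A B = r A ∅ - r B ∅) := by
  constructor
  · rintro ⟨h1, h2, h3⟩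
    have hadd : ∀ A B : Finset α, B ⊆ A → r A ∅ = r A B + r B ∅ := fun A B h =>
      h3 A B ∅ (empty_subset _) h
    have h0 : r ∅ ∅ = 0 := by
      have := h3 (∅ : Finset α) ∅ ∅ (subset_refl _) (subset_refl _); omega
    refine ⟨⟨h0, ?_, ?_, ?_⟩, ?_⟩
    · intro A x
      by_cases hx : x ∈ A
      · simp [Finset.insert_eq_self.2 hx]
      · have hsub : A ⊆ insert x A := subset_insert _ _
        have he := hadd (insert x A) A hsub
        have hc := h1 (insert x A) A hsub
        have hcard : (insert x A \ A).card ≤ 1 := by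
          have : insert x A \ A ⊆ {x} := by
            intro y hy
            simp only [mem_sdiff, mem_insert] at hy
            simp [hy.1.resolve_right hy.2]
          simpa using card_le_card this
        simp only
        omega
    · intro A B
      have e1 := hadd (A ∪ B) B subset_union_right
      have e2 := hadd A (A ∩ B) inter_subset_left
      have := h2 A B
      simp only
      omega
    · intro A
      have := h1 A ∅ (empty_subset _)
      simpa using this
    · intro A B h
      have := hadd A B h
      omega
  · rintro ⟨⟨h0, hins, hsub, hcard⟩, hr⟩
    simp only at h0 hins hsub hcard
    have step : ∀ (B S : Finset α),
        r B ∅ ≤ r (B ∪ S) ∅ ∧ r (B ∪ S) ∅ ≤ r B ∅ + S.card := by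
      intro B S
      induction S using Finset.induction_on with
      | empty => simp
      | @insert x S hx ih =>
        rw [Finset.union_insert]
        have h1 := hins (B ∪ S) x
        have h2 : S.card + 1 = (insert x S).card := (card_insert_of_notMem hx).symm
        omega
    have mono : ∀ A B : Finset α, B ⊆ A → r B ∅ ≤ r A ∅ := by
      intro A B h
      have := (step B A).1
      rwa [Finset.union_eq_right.mpr h] at this
    have bound : ∀ A B : Finset α, B ⊆ A → r A ∅ ≤ r B ∅ + (A \ B).card := by
      intro A B h
      have := (step B (A \ B)).2
      rwa [Finset.union_sdiff_of_subset h] at this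
    refine ⟨?_, ?_, ?_⟩
    · intro A B h
      rw [hr A B h]
      have := mono A B h
      have := bound A B h
      omega
    · intro A B
      rw [hr (A ∪ B) B subset_union_right, hr A (A ∩ B) inter_subset_left]
      have := hsub A B
      have := mono (A ∪ B) B subset_union_right
      have := mono A (A ∩ B) inter_subset_left
      omega
    · intro A B C hCB hBA
      rw [hr A C (hCB.trans hBA), hr A B hBA, hr B C hCB]
      have := mono A B hBA
      have := mono B C hCB
      have := mono A C (hCB.trans hBA)
      omega
end

section
/- Let F be a field, A a set, and X a set of functions A → F that is thin, i.e., for every a ∈ A only finitely many x ∈ X satisfy x(a) ≠ 0. Then the span ⟨X⟩, consisting of all pointwise sums Σ_{x∈X'} α_x x over thin subsets X' ⊆ X with coefficients α_x ∈ F, is a closed subset of F^A in the product topology (F discrete). -/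
variable {A F : Type*}

/-- A set `X` of functions `A → F` is thin if for every `a ∈ A` only finitely many
`x ∈ X` have `x a ≠ 0`. -/
def Thin [Zero F] (X : Set (A → F)) : Prop :=
  ∀ a : A, {x ∈ X | x a ≠ 0}.Finite

/-- The thin span of `X`: all pointwise sums `Σ_{x ∈ X'} α_x • x` over thin subsets
`X' ⊆ X` with coefficients in `F`. -/
def thinSpan [Field F] (X : Set (A → F)) : Set (A → F) :=
  {f | ∃ (X' : Set (A → F)) (α : (A → F) → F), X' ⊆ X ∧ Thin X' ∧
        f = fun a => ∑ᶠ x ∈ X', α x * x a}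

namespace ThinSpanAux

open Set
open scoped Classical

section

variable [Field F] (X : Set (A → F)) (hX : Thin X) (f : A → F)

/-- The functions in `X` that are nonzero somewhere on `Y`. -/
def XY (Y : Set A) : Set (A → F) := {x ∈ X | ∃ a ∈ Y, x a ≠ 0}

lemma XY_mono {Y Y' : Set A} (h : Y ⊆ Y') : XY X Y ⊆ XY X Y' := by
  rintro x ⟨hx, a, ha, hxa⟩
  exact ⟨hx, a, h ha, hxa⟩

include hX in
lemma XY_finite (S : Finset A) : (XY X ↑S).Finite := by
  have hsub : XY X ↑S ⊆ ⋃ a ∈ S, {x ∈ X | x a ≠ 0} := by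
    rintro x ⟨hx, a, ha, hxa⟩
    exact Set.mem_biUnion ha ⟨hx, hxa⟩
  exact (Set.Finite.biUnion S.finite_toSet fun a _ => hX a).subset hsub

lemma XY_empty : XY X (↑(∅ : Finset A)) = ∅ := by
  ext x; simp [XY]

/-- The affine-linear functional expressing the equation at the point `a`,
homogenized with the extra coordinate `p.2`. -/
noncomputable def ga (a : A) : (((A → F) → F) × F) →ₗ[F] F where
  toFun p := (∑ x ∈ (hX a).toFinset, p.1 x * x a) - p.2 * f a
  map_add' p q := by
    simp only [Prod.fst_add, Prod.snd_add, Pi.add_apply, add_mul, Finset.sum_add_distrib]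
    ring
  map_smul' c p := by
    simp only [Prod.smul_fst, Prod.smul_snd, Pi.smul_apply, smul_eq_mul, RingHom.id_apply,
      Finset.mul_sum, mul_sub, mul_assoc]

/-- Solution space of the homogenized system on the finite set `S`. -/
noncomputable def LS (S : Finset A) : Submodule F (((A → F) → F) × F) :=
  ⨅ a ∈ S, LinearMap.ker (ga X hX f a)

lemma mem_LS {S : Finset A} {p : ((A → F) → F) × F} :
    p ∈ LS X hX f S ↔ ∀ a ∈ S, ga X hX f a p = 0 := by
  simp [LS, Submodule.mem_iInf, LinearMap.mem_ker]

lemma LS_anti {S T : Finset A} (h : S ⊆ T) : LS X hX f T ≤ LS X hX f S := by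
  intro p hp
  rw [mem_LS] at hp ⊢
  exact fun a ha => hp a (h ha)

/-- Projection onto the coordinates indexed by functions relevant to `S`. -/
noncomputable def eS (S : Finset A) :
    (((A → F) → F) × F) →ₗ[F] (((A → F) → F) × F) where
  toFun p := (Set.indicator (XY X ↑S) p.1, p.2)
  map_add' p q := by
    refine Prod.ext ?_ rfl
    funext x
    by_cases hx : x ∈ XY X ↑S <;>
      simp [Set.indicator_of_mem, Set.indicator_of_notMem, hx]
  map_smul' c p := by
    refine Prod.ext ?_ rfl
    funext x
    by_cases hx : x ∈ XY X ↑S <;>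
      simp [Set.indicator_of_mem, Set.indicator_of_notMem, hx]

lemma eS_snd (S : Finset A) (p : ((A → F) → F) × F) : (eS X S p).2 = p.2 := rfl

lemma eS_fst (S : Finset A) (p : ((A → F) → F) × F) :
    (eS X S p).1 = Set.indicator (XY X ↑S) p.1 := rfl

lemma eS_comp {S T : Finset A} (h : S ⊆ T) (p : ((A → F) → F) × F) :
    eS X S (eS X T p) = eS X S p := by
  refine Prod.ext ?_ rfl
  show Set.indicator (XY X ↑S) (Set.indicator (XY X ↑T) p.1) = Set.indicator (XY X ↑S) p.1
  rw [Set.indicator_indicator,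
    Set.inter_eq_left.2 (XY_mono X (by exact_mod_cast Finset.coe_subset.2 h))]

lemma eS_congr {S : Finset A} {p q : ((A → F) → F) × F}
    (h1 : ∀ x ∈ XY X ↑S, p.1 x = q.1 x) (h2 : p.2 = q.2) : eS X S p = eS X S q := by
  refine Prod.ext ?_ h2
  exact Set.indicator_congr h1

lemma ga_eS {S : Finset A} {a : A} (ha : a ∈ S) (p : ((A → F) → F) × F) :
    ga X hX f a (eS X S p) = ga X hX f a p := by
  show (∑ x ∈ (hX a).toFinset, Set.indicator (XY X ↑S) p.1 x * x a) - p.2 * f a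
      = (∑ x ∈ (hX a).toFinset, p.1 x * x a) - p.2 * f a
  congr 1
  refine Finset.sum_congr rfl fun x hx => ?_
  rw [Set.Finite.mem_toFinset] at hx
  have hmem : x ∈ XY X ↑S := ⟨hx.1, a, Finset.mem_coe.2 ha, hx.2⟩
  rw [Set.indicator_of_mem hmem]

/-- Submodule of pairs whose first coordinate is supported on `s`. -/
def suppSub (s : Set (A → F)) : Submodule F (((A → F) → F) × F) where
  carrier := {p | ∀ x, x ∉ s → p.1 x = 0}
  add_mem' := fun hp hq x hx => by
    simp only [Prod.fst_add, Pi.add_apply, hp x hx, hq x hx, add_zero]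
  zero_mem' := fun x hx => rfl
  smul_mem' := fun c p hp x hx => by
    simp only [Prod.smul_fst, Pi.smul_apply, hp x hx, smul_zero]

lemma mem_suppSub {s : Set (A → F)} {p : ((A → F) → F) × F} :
    p ∈ suppSub (F := F) s ↔ ∀ x, x ∉ s → p.1 x = 0 := Iff.rfl

lemma fd_suppSub {s : Set (A → F)} (hs : s.Finite) :
    FiniteDimensional F (suppSub (F := F) s) := by
  classical
  let θ : suppSub (F := F) s →ₗ[F] (↥hs.toFinset → F) × F :=
    { toFun := fun p => (fun y => p.val.1 y, p.val.2)
      map_add' := fun p q => rfl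
      map_smul' := fun c p => rfl }
  refine FiniteDimensional.of_injective θ ?_
  intro p q hpq
  apply Subtype.ext
  have hpq' : ((fun y : ↥hs.toFinset => p.val.1 y, p.val.2) : (↥hs.toFinset → F) × F)
      = (fun y : ↥hs.toFinset => q.val.1 y, q.val.2) := hpq
  have h2 := congrArg Prod.snd hpq'
  refine Prod.ext ?_ h2
  funext x
  by_cases hx : x ∈ s
  · exact congrFun (congrArg Prod.fst hpq') ⟨x, hs.mem_toFinset.2 hx⟩
  · rw [p.prop x hx, q.prop x hx]

lemma eS_mem_suppSub (S : Finset A) (p : ((A → F) → F) × F) :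
    eS X S p ∈ suppSub (F := F) (XY X ↑S) := by
  intro x hx
  exact Set.indicator_of_notMem hx _

/-- Projection of the solution space over `S ∪ T` to the coordinates relevant to `S`. -/
noncomputable def NT (S T : Finset A) : Submodule F (((A → F) → F) × F) :=
  (LS X hX f (S ∪ T)).map (eS X S)

lemma NT_anti (S : Finset A) {T T' : Finset A} (h : T ⊆ T') :
    NT X hX f S T' ≤ NT X hX f S T :=
  Submodule.map_mono (LS_anti X hX f (Finset.union_subset_union_right h))

lemma NT_le_suppSub (S T : Finset A) : NT X hX f S T ≤ suppSub (F := F) (XY X ↑S) := by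
  rintro p ⟨q, _, rfl⟩
  exact eS_mem_suppSub X S q

lemma NT_fd (S T : Finset A) : FiniteDimensional F (NT X hX f S T) := by
  haveI := fd_suppSub (F := F) (XY_finite X hX S)
  exact Submodule.finiteDimensional_of_le (NT_le_suppSub X hX f S T)

lemma exists_goodT (S : Finset A) :
    ∃ T0 : Finset A, ∀ T, NT X hX f S (T0 ∪ T) = NT X hX f S T0 := by
  have hne : (Set.range fun T => Module.finrank F (NT X hX f S T)).Nonempty :=
    ⟨Module.finrank F (NT X hX f S ∅), ⟨∅, rfl⟩⟩
  obtain ⟨T0, hT0⟩ := Nat.sInf_mem hne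
  have hT0' : Module.finrank F (NT X hX f S T0)
      = sInf (Set.range fun T => Module.finrank F (NT X hX f S T)) := hT0
  refine ⟨T0, fun T => ?_⟩
  haveI := NT_fd X hX f S T0
  refine Submodule.eq_of_le_of_finrank_le (NT_anti X hX f S Finset.subset_union_left) ?_
  rw [hT0']
  exact Nat.sInf_le ⟨T0 ∪ T, rfl⟩

noncomputable def goodT (S : Finset A) : Finset A := (exists_goodT X hX f S).choose

lemma goodT_spec (S T : Finset A) :
    NT X hX f S (goodT X hX f S ∪ T) = NT X hX f S (goodT X hX f S) :=
  (exists_goodT X hX f S).choose_spec T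

/-- The stabilized (essential) projection of the solution spaces. -/
noncomputable def DS (S : Finset A) : Submodule F (((A → F) → F) × F) :=
  NT X hX f S (goodT X hX f S)

lemma DS_le_NT (S T : Finset A) : DS X hX f S ≤ NT X hX f S T := by
  rw [DS, ← goodT_spec X hX f S T]
  exact NT_anti X hX f S Finset.subset_union_right

lemma DS_eq_NT_of {S T : Finset A} (h : goodT X hX f S ⊆ T) :
    DS X hX f S = NT X hX f S T := by
  have := goodT_spec X hX f S T
  rw [Finset.union_eq_right.2 h] at this
  rw [DS, this]

lemma DS_fix {S : Finset A} {p : ((A → F) → F) × F} (hp : p ∈ DS X hX f S) :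
    eS X S p = p := by
  obtain ⟨q, _, rfl⟩ := hp
  exact eS_comp X (subset_refl S) q

lemma eS_comp' {S T : Finset A} (h : S ⊆ T) : (eS X S).comp (eS X T) = eS X S :=
  LinearMap.ext (eS_comp X h)

lemma DS_compat {S S' : Finset A} (h : S ⊆ S') :
    (DS X hX f S').map (eS X S) = DS X hX f S := by
  set T : Finset A := goodT X hX f S ∪ goodT X hX f S' ∪ S' with hT
  have hS'T : S' ⊆ T := Finset.subset_union_right
  have hST : S ⊆ T := h.trans hS'T
  have h1 : DS X hX f S' = NT X hX f S' T :=
    DS_eq_NT_of X hX f (Finset.subset_union_left.trans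
      (Finset.union_subset_union_left Finset.subset_union_right))
  have h2 : DS X hX f S = NT X hX f S T :=
    DS_eq_NT_of X hX f
      ((Finset.subset_union_left (s₂ := goodT X hX f S')).trans Finset.subset_union_left)
  have h3 : S' ∪ T = S ∪ T := by
    rw [Finset.union_eq_right.2 hS'T, Finset.union_eq_right.2 hST]
  rw [h1, h2, NT, NT, h3, ← Submodule.map_comp, eS_comp' X h]

lemma DS_le_LS (S : Finset A) : DS X hX f S ≤ LS X hX f S := by
  refine (DS_le_NT X hX f S ∅).trans ?_
  rintro p ⟨q, hq, rfl⟩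
  rw [mem_LS]
  intro a ha
  rw [ga_eS X hX f ha]
  rw [SetLike.mem_coe, mem_LS] at hq
  exact hq a (by simpa using ha)

lemma exists_one_LS [TopologicalSpace F] [DiscreteTopology F]
    (hf : f ∈ closure (thinSpan X)) (S : Finset A) :
    ∃ p ∈ LS X hX f S, p.2 = 1 := by
  classical
  have hU : IsOpen (Set.pi (↑S : Set A) fun a => ({f a} : Set F)) :=
    isOpen_set_pi S.finite_toSet fun a _ => isOpen_discrete _
  have hfU : f ∈ Set.pi (↑S : Set A) fun a => ({f a} : Set F) := fun a _ => rfl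
  obtain ⟨g, hgU, hg⟩ := mem_closure_iff.1 hf _ hU hfU
  obtain ⟨X', αg, hX'sub, _, rfl⟩ := hg
  refine ⟨(Set.indicator X' αg, 1), ?_, rfl⟩
  rw [mem_LS]
  intro a ha
  show (∑ x ∈ (hX a).toFinset, Set.indicator X' αg x * x a) - 1 * f a = 0
  have hga : (∑ᶠ x ∈ X', αg x * x a) = f a := by
    have := hgU a ha
    simpa using this
  rw [one_mul, sub_eq_zero, ← hga]
  have h1 : (∑ᶠ x ∈ X', αg x * x a) = ∑ᶠ x ∈ X', Set.indicator X' αg x * x a :=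
    finsum_mem_congr rfl fun x hx => by rw [Set.indicator_of_mem hx]
  rw [h1]
  refine (finsum_mem_eq_sum_of_inter_support_eq _ ?_).symm
  ext x
  simp only [Set.mem_inter_iff, Function.mem_support, Set.Finite.coe_toFinset,
    Set.mem_setOf_eq]
  constructor
  · rintro ⟨hx1, hx2⟩
    have hxa : x a ≠ 0 := fun h0 => hx2 (by rw [h0, mul_zero])
    exact ⟨⟨hX'sub hx1, hxa⟩, hx2⟩
  · rintro ⟨_, hx2⟩
    have hαx : Set.indicator X' αg x ≠ 0 := fun h0 => hx2 (by rw [h0, zero_mul])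
    exact ⟨Set.mem_of_indicator_ne_zero hαx, hx2⟩

lemma exists_one_DS (hone : ∀ S : Finset A, ∃ p ∈ LS X hX f S, p.2 = 1) (S : Finset A) :
    ∃ β : (A → F) → F, (β, (1 : F)) ∈ DS X hX f S := by
  obtain ⟨p, hp, h1⟩ := hone (S ∪ goodT X hX f S)
  refine ⟨(eS X S p).1, ?_⟩
  have hm : eS X S p ∈ DS X hX f S := Submodule.mem_map_of_mem hp
  have : ((eS X S p).1, (1 : F)) = eS X S p := by
    refine Prod.ext rfl ?_
    rw [eS_snd, h1]
  rw [this]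
  exact hm

/-- A partial solution on `Y`. -/
def Sol (Y : Set A) (α : (A → F) → F) : Prop :=
  (∀ x, x ∉ XY X Y → α x = 0) ∧
    ∀ S : Finset A, ↑S ⊆ Y → eS X S (α, 1) ∈ DS X hX f S

lemma extend {Y : Set A} {α : (A → F) → F} (hsol : Sol X hX f Y α) (a : A) :
    ∃ v : (A → F) → F, (∀ x ∈ XY X Y, v x = 0) ∧ Sol X hX f (insert a Y) (α + v) := by
  classical
  set N : Set (A → F) := {x ∈ X | x a ≠ 0 ∧ x ∉ XY X Y} with hN
  have hNfin : N.Finite := (hX a).subset fun x hx => ⟨hx.1, hx.2.1⟩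
  have hNXY : ∀ x ∈ N, x ∈ XY X (insert a Y) := fun x hx =>
    ⟨hx.1, a, Set.mem_insert a Y, hx.2.1⟩
  set K : Set (A → F) := {x ∈ X | x a ≠ 0 ∧ x ∈ XY X Y} with hK
  have hKfin : K.Finite := (hX a).subset fun x hx => ⟨hx.1, hx.2.1⟩
  have hKb : ∀ x, x ∈ K → ∃ bb, bb ∈ Y ∧ x bb ≠ 0 := by
    rintro x ⟨_, _, hxy⟩
    obtain ⟨bb, hb, hxb⟩ := hxy.2
    exact ⟨bb, hb, hxb⟩
  haveI : Nonempty A := ⟨a⟩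
  choose! b hbY hbne using hKb
  set B : Finset A := hKfin.toFinset.image b with hB
  have hBY : ↑B ⊆ Y := by
    intro y hy
    simp only [hB, Finset.coe_image, Set.mem_image, Set.Finite.coe_toFinset] at hy
    obtain ⟨x, hxK, rfl⟩ := hy
    exact hbY x hxK
  have hBhit : ∀ x ∈ K, ∃ b' ∈ B, x b' ≠ 0 := by
    intro x hxK
    exact ⟨b x, Finset.mem_image_of_mem b (hKfin.mem_toFinset.2 hxK), hbne x hxK⟩
  set ψ : (((A → F) → F) × F) →ₗ[F] (((A → F) → F) × F) :=
    { toFun := fun p => (p.2 • α + Set.indicator N p.1, p.2)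
      map_add' := fun p q => by
        refine Prod.ext ?_ rfl
        show (p + q).2 • α + Set.indicator N (p + q).1
            = (p.2 • α + Set.indicator N p.1) + (q.2 • α + Set.indicator N q.1)
        funext x
        by_cases hx : x ∈ N <;>
          simp only [Prod.fst_add, Prod.snd_add, Pi.add_apply, Pi.smul_apply,
            Set.indicator_of_mem, Set.indicator_of_notMem, hx, smul_eq_mul, add_mul,
            not_false_iff, add_zero] <;> ring
      map_smul' := fun cc p => by
        refine Prod.ext ?_ rfl
        show (cc • p).2 • α + Set.indicator N (cc • p).1
            = cc • (p.2 • α + Set.indicator N p.1)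
        funext x
        by_cases hx : x ∈ N <;>
          simp only [Prod.smul_fst, Prod.smul_snd, Pi.add_apply, Pi.smul_apply,
            Set.indicator_of_mem, Set.indicator_of_notMem, hx, smul_eq_mul, mul_add,
            not_false_iff, add_zero] <;> ring } with hψ
  set Φ : Finset A → ((((A → F) → F) × F) →ₗ[F] (((A → F) → F) × F)) :=
    fun S0 => (eS X (insert a S0)).comp ψ with hΦ
  set G : Finset A → Submodule F (((A → F) → F) × F) :=
    fun S0 => suppSub (F := F) N ⊓ Submodule.comap (Φ S0) (DS X hX f (insert a S0)) with hG
  have hGfd : ∀ S0, FiniteDimensional F (G S0) := by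
    intro S0
    haveI := fd_suppSub (F := F) hNfin
    exact Submodule.finiteDimensional_of_le inf_le_left
  have hGanti : ∀ {S0 S1 : Finset A}, S0 ⊆ S1 → G S1 ≤ G S0 := by
    intro S0 S1 h p hp
    obtain ⟨hp1, hp2⟩ := Submodule.mem_inf.1 hp
    refine Submodule.mem_inf.2 ⟨hp1, ?_⟩
    rw [Submodule.mem_comap] at hp2 ⊢
    have key : Φ S0 p = eS X (insert a S0) (Φ S1 p) := by
      simp only [hΦ, LinearMap.comp_apply]
      exact (eS_comp X (Finset.insert_subset_insert a h) (ψ p)).symm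
    rw [key, ← DS_compat X hX f (Finset.insert_subset_insert a h)]
    exact Submodule.mem_map_of_mem hp2
  have hGone : ∀ S0 : Finset A, ↑S0 ⊆ Y → ∃ v, (v, (1 : F)) ∈ G S0 := by
    intro S0 hS0Y
    set S'' : Finset A := S0 ∪ B with hS''
    have hS''Y : ↑S'' ⊆ Y := by
      rw [hS'', Finset.coe_union]
      exact Set.union_subset hS0Y hBY
    have h2 := hsol.2 S'' hS''Y
    rw [← DS_compat X hX f (Finset.subset_insert a S'')] at h2
    obtain ⟨q, hqD, hqe⟩ := Submodule.mem_map.1 h2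
    have hq2 : q.2 = 1 := by
      have hq2' := congrArg Prod.snd hqe
      rw [eS_snd, eS_snd] at hq2'
      exact hq2'
    have hqfix : eS X (insert a S'') q = q := DS_fix X hX f hqD
    have hx1key : ∀ x ∈ XY X ↑(insert a S''), α x + Set.indicator N q.1 x = q.1 x := by
      intro x hx
      by_cases hxN : x ∈ N
      · rw [Set.indicator_of_mem hxN, hsol.1 x hxN.2.2, zero_add]
      · rw [Set.indicator_of_notMem hxN, add_zero]
        have hxS'' : x ∈ XY X ↑S'' := by
          obtain ⟨hxX, bb, hbb, hxbb⟩ := hx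
          rw [Finset.coe_insert, Set.mem_insert_iff] at hbb
          rcases hbb with rfl | hbbS
          · have hxXY : x ∈ XY X Y := by
              by_contra hxXY
              exact hxN ⟨hxX, hxbb, hxXY⟩
            obtain ⟨b', hb'B, hxb'⟩ := hBhit x ⟨hxX, hxbb, hxXY⟩
            exact ⟨hxX, b', Finset.mem_coe.2 (Finset.mem_union_right _ hb'B), hxb'⟩
          · exact ⟨hxX, bb, hbbS, hxbb⟩
        have e1 := congrFun (congrArg Prod.fst hqe) x
        rw [eS_fst, eS_fst, Set.indicator_of_mem hxS'', Set.indicator_of_mem hxS''] at e1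
        exact e1.symm
    have hkey : Φ S'' (Set.indicator N q.1, (1 : F)) = q := by
      simp only [hΦ, LinearMap.comp_apply]
      have hψval : ψ (Set.indicator N q.1, (1 : F))
          = (α + Set.indicator N q.1, (1 : F)) := by
        refine Prod.ext ?_ rfl
        show (1 : F) • α + Set.indicator N (Set.indicator N q.1) = α + Set.indicator N q.1
        rw [one_smul, Set.indicator_indicator, Set.inter_self]
      rw [hψval]
      exact Eq.trans (eS_congr X (fun x hx => hx1key x hx) hq2.symm) hqfix
    have hmemS'' : (Set.indicator N q.1, (1 : F)) ∈ G S'' := by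
      refine Submodule.mem_inf.2 ⟨?_, ?_⟩
      · intro x hx
        exact Set.indicator_of_notMem hx _
      · rw [Submodule.mem_comap, hkey]
        exact hqD
    exact ⟨Set.indicator N q.1, hGanti Finset.subset_union_left hmemS''⟩
  have hGmin : ∃ S0 : Finset A, ↑S0 ⊆ Y ∧ ∀ S1 : Finset A, ↑S1 ⊆ Y → G S0 ≤ G S1 := by
    have hne : {k | ∃ S0 : Finset A, ↑S0 ⊆ Y ∧ Module.finrank F (G S0) = k}.Nonempty :=
      ⟨_, ∅, by simp, rfl⟩
    obtain ⟨S0, hS0Y, hS0r⟩ := Nat.sInf_mem hne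
    refine ⟨S0, hS0Y, fun S1 hS1Y => ?_⟩
    haveI := hGfd S0
    have hle : G (S0 ∪ S1) ≤ G S0 := hGanti Finset.subset_union_left
    have heq : G (S0 ∪ S1) = G S0 := by
      refine Submodule.eq_of_le_of_finrank_le hle ?_
      rw [hS0r]
      refine Nat.sInf_le ⟨S0 ∪ S1, ?_, rfl⟩
      rw [Finset.coe_union]
      exact Set.union_subset hS0Y hS1Y
    rw [← heq]
    exact hGanti Finset.subset_union_right
  obtain ⟨S0s, hS0sY, hS0smin⟩ := hGmin
  obtain ⟨v, hv⟩ := hGone S0s hS0sY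
  have hvG : ∀ S1 : Finset A, ↑S1 ⊆ Y → (v, (1 : F)) ∈ G S1 := fun S1 h => hS0smin S1 h hv
  have hvsupp : ∀ x, x ∉ N → v x = 0 := (Submodule.mem_inf.1 hv).1
  refine ⟨v, ?_, ?_, ?_⟩
  · intro x hx
    exact hvsupp x fun hxN => hxN.2.2 hx
  · intro x hx
    have hxY : x ∉ XY X Y := fun h => hx (XY_mono X (Set.subset_insert a Y) h)
    have hxN : x ∉ N := fun h => hx (hNXY x h)
    show α x + v x = 0
    rw [hsol.1 x hxY, hvsupp x hxN, add_zero]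
  · intro S hS
    by_cases haS : a ∈ S
    · set S0 := S.erase a with hS0
      have hS0Y : ↑S0 ⊆ Y := by
        intro bb hbb
        simp only [hS0, Finset.coe_erase, Set.mem_diff, Finset.mem_coe,
          Set.mem_singleton_iff] at hbb
        rcases Set.mem_insert_iff.1 (hS hbb.1) with h | h
        · exact absurd h hbb.2
        · exact h
      have hmem2 := (Submodule.mem_inf.1 (hvG S0 hS0Y)).2
      rw [Submodule.mem_comap] at hmem2
      have hins : insert a S0 = S := Finset.insert_erase haS
      have hval : Φ S0 (v, (1 : F)) = eS X (insert a S0) ((α + v : (A → F) → F), (1 : F)) := by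
        simp only [hΦ, LinearMap.comp_apply]
        congr 1
        refine Prod.ext ?_ rfl
        show (1 : F) • α + Set.indicator N v = α + v
        rw [one_smul]
        congr 1
        funext x
        by_cases hxN : x ∈ N
        · rw [Set.indicator_of_mem hxN]
        · rw [Set.indicator_of_notMem hxN, hvsupp x hxN]
      rw [hval, hins] at hmem2
      exact hmem2
    · have hSY : ↑S ⊆ Y := by
        intro bb hbb
        rcases Set.mem_insert_iff.1 (hS hbb) with h | h
        · exact absurd (h ▸ hbb) haS
        · exact h
      have heq : eS X S ((α + v : (A → F) → F), (1 : F)) = eS X S (α, 1) := by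
        refine eS_congr X ?_ rfl
        intro x hx
        show α x + v x = α x
        have hxN : x ∉ N := fun hxN => hxN.2.2 (XY_mono X hSY hx)
        rw [hvsupp x hxN, add_zero]
      rw [heq]
      exact hsol.2 S hSY

lemma sol_empty (hone : ∀ S : Finset A, ∃ p ∈ LS X hX f S, p.2 = 1) :
    Sol X hX f ∅ (0 : (A → F) → F) := by
  constructor
  · intro x _; rfl
  · intro S hS
    have hSe : S = ∅ := Finset.coe_eq_empty.1 (Set.subset_empty_iff.1 hS)
    subst hSe
    obtain ⟨β, hβ⟩ := exists_one_DS X hX f hone ∅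
    have hfix := DS_fix X hX f hβ
    have h0 : ∀ γ : (A → F) → F, eS X ∅ (γ, (1 : F)) = ((0 : (A → F) → F), (1 : F)) := by
      intro γ
      refine Prod.ext ?_ rfl
      rw [eS_fst, XY_empty]
      funext x
      simp
    rw [h0]
    rw [h0 β] at hfix
    rw [hfix]
    exact hβ

lemma exists_total (hone : ∀ S : Finset A, ∃ p ∈ LS X hX f S, p.2 = 1) :
    ∃ α : (A → F) → F, Sol X hX f Set.univ α := by
  classical
  let Γ := {p : Set A × ((A → F) → F) // Sol X hX f p.1 p.2}
  let r : Γ → Γ → Prop := fun p q =>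
    p.val.1 ⊆ q.val.1 ∧ ∀ x ∈ XY X p.val.1, q.val.2 x = p.val.2 x
  have htrans : ∀ {p q s : Γ}, r p q → r q s → r p s := by
    rintro p q s ⟨h1, h2⟩ ⟨h3, h4⟩
    refine ⟨h1.trans h3, fun x hx => ?_⟩
    rw [h4 x (XY_mono X h1 hx), h2 x hx]
  have triv : Γ := ⟨(∅, 0), sol_empty X hX f hone⟩
  have hchains : ∀ c : Set Γ, IsChain r c → ∃ ub, ∀ p ∈ c, r p ub := by
    intro c hc
    by_cases hcne : c.Nonempty
    swap
    · exact ⟨triv, fun p hp => absurd ⟨p, hp⟩ hcne⟩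
    set Ystar : Set A := ⋃ p ∈ c, p.val.1 with hYstar
    set αstar : (A → F) → F := fun x =>
      if h : ∃ p, p ∈ c ∧ x ∈ XY X p.val.1 then h.choose.val.2 x else 0 with hαstar
    have hcons : ∀ p ∈ c, ∀ x ∈ XY X p.val.1, αstar x = p.val.2 x := by
      intro p hp x hx
      have hex : ∃ q, q ∈ c ∧ x ∈ XY X q.val.1 := ⟨p, hp, hx⟩
      rw [hαstar]
      simp only [dif_pos hex]
      rcases eq_or_ne hex.choose p with heq | hne
      · rw [heq]
      · rcases hc hex.choose_spec.1 hp hne with hr | hr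
        · exact (hr.2 x hex.choose_spec.2).symm
        · exact hr.2 x hx
    have hYsub : ∀ p ∈ c, p.val.1 ⊆ Ystar := by
      intro p hp
      exact Set.subset_biUnion_of_mem (u := fun q => q.val.1) hp
    have hfin : ∀ S : Finset A, ↑S ⊆ Ystar → ∃ p ∈ c, ↑S ⊆ p.val.1 := by
      intro S
      induction S using Finset.induction_on with
      | empty =>
        intro _
        obtain ⟨p, hp⟩ := hcne
        exact ⟨p, hp, by simp⟩
      | @insert a S hna IH =>
        intro hins
        have hS : ↑S ⊆ Ystar :=
          (Finset.coe_subset.2 (Finset.subset_insert a S)).trans hins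
        obtain ⟨p, hp, hSp⟩ := IH hS
        have haY : a ∈ Ystar := hins (by simp)
        rw [hYstar] at haY
        obtain ⟨q, hq, haq⟩ := Set.mem_iUnion₂.1 haY
        rcases eq_or_ne p q with rfl | hne
        · refine ⟨p, hp, ?_⟩
          intro b hb
          rw [Finset.coe_insert, Set.mem_insert_iff] at hb
          rcases hb with rfl | hb
          · exact haq
          · exact hSp hb
        · rcases hc hp hq hne with hr | hr
          · refine ⟨q, hq, ?_⟩
            intro b hb
            rw [Finset.coe_insert, Set.mem_insert_iff] at hb
            rcases hb with rfl | hb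
            · exact haq
            · exact hr.1 (hSp hb)
          · refine ⟨p, hp, ?_⟩
            intro b hb
            rw [Finset.coe_insert, Set.mem_insert_iff] at hb
            rcases hb with rfl | hb
            · exact hr.1 haq
            · exact hSp hb
    have hub : Sol X hX f Ystar αstar := by
      constructor
      · intro x hx
        have hnex : ¬∃ q, q ∈ c ∧ x ∈ XY X q.val.1 := by
          rintro ⟨q, hq, hxq⟩
          exact hx (XY_mono X (hYsub q hq) hxq)
        rw [hαstar]
        simp only [dif_neg hnex]
      · intro S hS
        obtain ⟨p, hp, hSp⟩ := hfin S hS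
        have heq : eS X S (αstar, 1) = eS X S (p.val.2, 1) :=
          eS_congr X (fun x hx => hcons p hp x (XY_mono X hSp hx)) rfl
        rw [heq]
        exact p.prop.2 S hSp
    exact ⟨⟨(Ystar, αstar), hub⟩, fun p hp => ⟨hYsub p hp, fun x hx => hcons p hp x hx⟩⟩
  obtain ⟨m, hm⟩ := exists_maximal_of_chains_bounded hchains (fun {p q s} => htrans)
  have huniv : m.val.1 = Set.univ := by
    by_contra hne
    obtain ⟨a, ha⟩ := (Set.ne_univ_iff_exists_notMem _).1 hne
    obtain ⟨v, hv0, hsol'⟩ := extend X hX f m.prop a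
    have h1 : r m ⟨(insert a m.val.1, m.val.2 + v), hsol'⟩ := by
      refine ⟨Set.subset_insert a _, fun x hx => ?_⟩
      show m.val.2 x + v x = m.val.2 x
      rw [hv0 x hx, add_zero]
    have h2 := hm _ h1
    exact ha (h2.1 (Set.mem_insert a _))
  refine ⟨m.val.2, ?_⟩
  rw [← huniv]
  exact m.prop

end

end ThinSpanAux

/-- If `X` is a thin set of functions `A → F`, then its thin span is a closed subset
of `F^A` in the product topology, `F` carrying the discrete topology. -/
theorem thinSpan_isClosed [Field F] [TopologicalSpace F] [DiscreteTopology F]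
    (X : Set (A → F)) (hX : Thin X) :
    IsClosed (thinSpan X) := by
  refine isClosed_of_closure_subset ?_
  intro f hf
  obtain ⟨α, hsol⟩ := ThinSpanAux.exists_total X hX f
    (fun S => ThinSpanAux.exists_one_LS X hX f hf S)
  refine ⟨X, α, subset_rfl, hX, ?_⟩
  funext a
  have h1 := hsol.2 {a} (by simp)
  have h2 := ThinSpanAux.DS_le_LS X hX f {a} h1
  rw [ThinSpanAux.mem_LS] at h2
  have h3 := h2 a (Finset.mem_singleton_self a)
  rw [ThinSpanAux.ga_eS X hX f (Finset.mem_singleton_self a)] at h3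
  have h4 : (∑ x ∈ (hX a).toFinset, α x * x a) - 1 * f a = 0 := h3
  rw [one_mul, sub_eq_zero] at h4
  rw [← h4]
  refine (finsum_mem_eq_sum_of_inter_support_eq _ ?_).symm
  ext x
  simp only [Set.mem_inter_iff, Function.mem_support, Set.Finite.coe_toFinset,
    Set.mem_setOf_eq]
  constructor
  · rintro ⟨hx1, hx2⟩
    have hxa : x a ≠ 0 := fun h0 => hx2 (by rw [h0, mul_zero])
    exact ⟨⟨hx1, hxa⟩, hx2⟩
  · rintro ⟨hx1, hx2⟩
    exact ⟨hx1.1, hx2⟩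
end

section
/- Let F be a field and A a set. For any set X of functions A → F, the double span satisfies ⟨⟨X⟩⟩ ⊆ closure(⟨X⟩), where closure is taken in the product topology on F^A with F discrete. -/
variable {A F : Type*}

open Classical in
lemma finset_combo_mem_thinSpan [Field F] {X : Set (A → F)} (T : Finset (A → F))
    (hT : ∀ y ∈ T, y ∈ thinSpan X) (α : (A → F) → F) :
    (fun a => ∑ y ∈ T, α y * y a) ∈ thinSpan X := by
  classical
  -- choice of representations
  set Xof : (A → F) → Set (A → F) := fun y =>
    if h : y ∈ thinSpan X then h.choose else ∅ with hXof
  set βof : (A → F) → (A → F) → F := fun y =>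
    if h : y ∈ thinSpan X then h.choose_spec.choose else 0 with hβof
  have hprop : ∀ y ∈ T, Xof y ⊆ X ∧ Thin (Xof y) ∧
      y = fun a => ∑ᶠ x ∈ Xof y, βof y x * x a := by
    intro y hy
    have h := hT y hy
    simp only [hXof, hβof, dif_pos h]
    exact ⟨h.choose_spec.choose_spec.1, h.choose_spec.choose_spec.2.1,
      h.choose_spec.choose_spec.2.2⟩
  refine ⟨⋃ y ∈ T, Xof y, fun x => ∑ y ∈ T, α y * (if x ∈ Xof y then βof y x else 0),
    ?_, ?_, ?_⟩
  · intro x hx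
    obtain ⟨y, hy, hxy⟩ := Set.mem_iUnion₂.mp hx
    exact (hprop y hy).1 hxy
  · intro a
    have : {x ∈ ⋃ y ∈ T, Xof y | x a ≠ 0} ⊆ ⋃ y ∈ (T : Set (A → F)), {x ∈ Xof y | x a ≠ 0} := by
      intro x hx
      obtain ⟨y, hy, hxy⟩ := Set.mem_iUnion₂.mp hx.1
      exact Set.mem_iUnion₂.mpr ⟨y, hy, hxy, hx.2⟩
    exact Set.Finite.subset (Set.Finite.biUnion T.finite_toSet
      (fun y hy => (hprop y hy).2.1 a)) this
  · funext a
    have hSfin : {x ∈ ⋃ y ∈ T, Xof y | x a ≠ 0}.Finite := by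
      have : {x ∈ ⋃ y ∈ T, Xof y | x a ≠ 0} ⊆ ⋃ y ∈ (T : Set (A → F)), {x ∈ Xof y | x a ≠ 0} := by
        intro x hx
        obtain ⟨y, hy, hxy⟩ := Set.mem_iUnion₂.mp hx.1
        exact Set.mem_iUnion₂.mpr ⟨y, hy, hxy, hx.2⟩
      exact Set.Finite.subset (Set.Finite.biUnion T.finite_toSet
        (fun y hy => (hprop y hy).2.1 a)) this
    set S : Finset (A → F) := hSfin.toFinset with hS
    have hSmem : ∀ x, x ∈ S ↔ x ∈ (⋃ y ∈ T, Xof y) ∧ x a ≠ 0 := by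
      intro x; simp [hS, Set.Finite.mem_toFinset]
    -- each y a as a finset sum over S
    have hy_eq : ∀ y ∈ T, y a = ∑ x ∈ S, (if x ∈ Xof y then βof y x else 0) * x a := by
      intro y hy
      have h1 : y a = ∑ᶠ x ∈ Xof y, βof y x * x a := by
        conv_lhs => rw [(hprop y hy).2.2]
      rw [h1]
      have h2 : ∑ᶠ x ∈ Xof y, βof y x * x a
          = ∑ᶠ x ∈ Xof y, (if x ∈ Xof y then βof y x else 0) * x a :=
        finsum_mem_congr rfl (fun x hx => by rw [if_pos hx])
      rw [h2]
      apply finsum_mem_eq_sum_of_inter_support_eq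
      ext x
      constructor
      · rintro ⟨hx1, hx2⟩
        refine ⟨?_, hx2⟩
        simp only [Finset.coe_sort_coe, Finset.mem_coe, hSmem]
        have hxa : x a ≠ 0 := by
          intro h0
          apply hx2
          simp [Function.mem_support, h0] at hx2 ⊢
        exact ⟨Set.mem_iUnion₂.mpr ⟨y, hy, hx1⟩, hxa⟩
      · rintro ⟨hx1, hx2⟩
        refine ⟨?_, hx2⟩
        simp only [Function.mem_support] at hx2
        by_contra hxy
        rw [if_neg hxy, zero_mul] at hx2
        exact hx2 rfl
    -- the main finsum as a finset sum over S
    have hmain : ∑ᶠ x ∈ ⋃ y ∈ T, Xof y,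
        (∑ y ∈ T, α y * (if x ∈ Xof y then βof y x else 0)) * x a
        = ∑ x ∈ S, (∑ y ∈ T, α y * (if x ∈ Xof y then βof y x else 0)) * x a := by
      apply finsum_mem_eq_sum_of_inter_support_eq
      ext x
      constructor
      · rintro ⟨hx1, hx2⟩
        refine ⟨?_, hx2⟩
        simp only [Finset.coe_sort_coe, Finset.mem_coe, hSmem]
        refine ⟨hx1, ?_⟩
        intro h0
        simp only [Function.mem_support, h0, mul_zero, ne_eq, not_true_eq_false] at hx2
      · rintro ⟨hx1, hx2⟩
        simp only [Finset.coe_sort_coe, Finset.mem_coe, hSmem] at hx1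
        exact ⟨hx1.1, hx2⟩
    rw [hmain]
    rw [Finset.sum_congr rfl (fun y hy => by rw [hy_eq y hy])]
    simp only [Finset.mul_sum, Finset.sum_mul, mul_assoc]
    rw [Finset.sum_comm]

/-- For any set `X` of functions `A → F`, the double thin span is contained in the
topological closure of the thin span, in the product topology with `F` discrete. -/
theorem thinSpan_thinSpan_subset_closure [Field F] [TopologicalSpace F] [DiscreteTopology F]
    (X : Set (A → F)) :
    thinSpan (thinSpan X) ⊆ closure (thinSpan X) := by
  classical
  rintro f ⟨Y, α, hYX, hthin, rfl⟩
  rw [mem_closure_iff]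
  intro U hU hfU
  obtain ⟨I, u, hu, hsub⟩ := isOpen_pi_iff.mp hU _ hfU
  have hYfin : {y ∈ Y | ∃ a ∈ I, y a ≠ 0}.Finite := by
    have : {y ∈ Y | ∃ a ∈ I, y a ≠ 0} ⊆ ⋃ a ∈ (I : Set A), {y ∈ Y | y a ≠ 0} := by
      rintro y ⟨hy, a, ha, hya⟩
      exact Set.mem_iUnion₂.mpr ⟨a, ha, hy, hya⟩
    exact Set.Finite.subset (Set.Finite.biUnion I.finite_toSet (fun a _ => hthin a)) this
  set T : Finset (A → F) := hYfin.toFinset with hT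
  refine ⟨fun a => ∑ y ∈ T, α y * y a, ?_, ?_⟩
  · apply hsub
    intro a ha
    have : (∑ y ∈ T, α y * y a) = ∑ᶠ y ∈ Y, α y * y a := by
      symm
      apply finsum_mem_eq_sum_of_inter_support_eq
      ext y
      constructor
      · rintro ⟨hy1, hy2⟩
        refine ⟨?_, hy2⟩
        simp only [Finset.coe_sort_coe, Finset.mem_coe, hT, Set.Finite.mem_toFinset]
        refine ⟨hy1, a, ha, ?_⟩
        intro h0
        simp only [Function.mem_support, h0, mul_zero, ne_eq, not_true_eq_false] at hy2
      · rintro ⟨hy1, hy2⟩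
        simp only [Finset.coe_sort_coe, Finset.mem_coe, hT, Set.Finite.mem_toFinset] at hy1
        exact ⟨hy1.1, hy2⟩
    show (∑ y ∈ T, α y * y a) ∈ u a
    rw [this]
    exact (hu a ha).2
  · refine finset_combo_mem_thinSpan T (fun y hy => hYX ?_) α
    have := (Set.Finite.mem_toFinset hYfin).mp hy
    exact this.1
end

section
/- Let F be a field, A a set, and E a thin set of functions A → F. Then the thinly independent subsets of E are the independent sets of a matroid on E. -/
variable {A F : Type*}

/-- A set `Y` of functions `A → F` is thinly independent if for every thin subset
`X ⊆ Y` and coefficients `α`, the pointwise sum `Σ_{x ∈ X} α_x • x` vanishes only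
when all coefficients vanish. -/
def ThinIndep [Field F] (Y : Set (A → F)) : Prop :=
  ∀ X : Set (A → F), X ⊆ Y → Thin X → ∀ α : (A → F) → F,
    (fun a => ∑ᶠ x ∈ X, α x * x a) = 0 → ∀ x ∈ X, α x = 0

namespace ThinSumsAux

open Set Submodule Finsupp Module

variable [Field F]

noncomputable section

variable (E : Set (A → F)) (hE : Thin E)

/-- The "row vector" of the family at the point `a`. -/
def phi (a : A) : (A → F) →₀ F :=
  ∑ x ∈ (hE a).toFinset, (x a) • Finsupp.single x (1 : F)

/-- The span of the row vectors. -/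
def W : Submodule F ((A → F) →₀ F) := Submodule.span F (Set.range (phi E hE))

/-- The key "cospanning" condition equivalent to thin independence of `I ⊆ E`. -/
def Cond (I : Set (A → F)) : Prop :=
  Finsupp.supported F F E ≤ W E hE ⊔ Finsupp.supported F F (E \ I)

include hE in
lemma thin_of_subset {X : Set (A → F)} (hX : X ⊆ E) : Thin X :=
  fun a => (hE a).subset fun y hy => ⟨hX hy.1, hy.2⟩

/-- A nonzero linear functional separating a vector from a subspace. -/
lemma exists_dual_of_not_mem {V : Type*} [AddCommGroup V] [Module F V]
    {U : Submodule F V} {v : V} (hv : v ∉ U) :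
    ∃ g : Module.Dual F V, (∀ u ∈ U, g u = 0) ∧ g v ≠ 0 := by
  have h1 : U.mkQ v ≠ 0 := by
    simpa [Submodule.mkQ_apply, Submodule.Quotient.mk_eq_zero] using hv
  have h2 : ¬ ∀ φ : Module.Dual F (V ⧸ U), φ (U.mkQ v) = 0 := by
    rw [Module.forall_dual_apply_eq_zero_iff]; exact h1
  push_neg at h2
  obtain ⟨f, hf⟩ := h2
  refine ⟨f ∘ₗ U.mkQ, fun u hu => ?_, hf⟩
  have : U.mkQ u = 0 := by
    rw [Submodule.mkQ_apply, Submodule.Quotient.mk_eq_zero]; exact hu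
  simp [this]

lemma finsum_eq {X : Set (A → F)} (hX : Thin X) (α : (A → F) → F) (a : A) :
    ∑ᶠ x ∈ X, α x * x a = ∑ x ∈ (hX a).toFinset, α x * x a := by
  apply finsum_mem_eq_sum_of_inter_support_eq
  ext x
  simp only [Set.Finite.coe_toFinset, Set.mem_inter_iff, Function.mem_support,
    Set.mem_setOf_eq]
  constructor
  · rintro ⟨hx, hne⟩
    exact ⟨⟨hx, fun h0 => hne (by rw [h0, mul_zero])⟩, hne⟩
  · rintro ⟨⟨hx, _⟩, hne⟩
    exact ⟨hx, hne⟩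

/-- The exchange step: if `S` is independent and `insert e S` is dependent, then
`δ_e` lies in `W ⊔ supported S`. -/
lemma single_mem_sup {S : Set (A → F)}
    (hS : Disjoint (Finsupp.supported F F S) (W E hE)) {e : A → F}
    (h : ¬ Disjoint (Finsupp.supported F F (insert e S)) (W E hE)) :
    Finsupp.single e (1 : F) ∈ W E hE ⊔ Finsupp.supported F F S := by
  classical
  rw [Submodule.disjoint_def] at h
  push_neg at h
  obtain ⟨l, hl1, hl2, hl0⟩ := h
  have hle : l e ≠ 0 := by
    intro h0
    apply hl0
    refine Submodule.disjoint_def.1 hS l ?_ hl2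
    rw [Finsupp.mem_supported] at hl1 ⊢
    intro x hx
    rcases hl1 hx with h | h
    · exact absurd (h ▸ hx) (by simpa [Finsupp.notMem_support_iff] using h0)
    · exact h
  have herase : l.erase e ∈ Finsupp.supported F F S := by
    rw [Finsupp.mem_supported]
    intro x hx
    rw [Finsupp.support_erase, Finset.coe_erase] at hx
    rcases (Finsupp.mem_supported F l).1 hl1 hx.1 with h | h
    · exact absurd h hx.2
    · exact h
  have key : Finsupp.single e (l e) = l - l.erase e := by
    rw [eq_sub_iff_add_eq, Finsupp.single_add_erase]
  have hsm : Finsupp.single e (l e) ∈ W E hE ⊔ Finsupp.supported F F S := by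
    rw [key]
    exact sub_mem (Submodule.mem_sup_left hl2) (Submodule.mem_sup_right herase)
  have := Submodule.smul_mem _ (l e)⁻¹ hsm
  rwa [Finsupp.smul_single, smul_eq_mul, inv_mul_cancel₀ hle] at this

/-- Independence predicate for the auxiliary finitary matroid. -/
def NIndep (S : Set (A → F)) : Prop :=
  S ⊆ E ∧ Disjoint (Finsupp.supported F F S) (W E hE)

lemma nIndep_aug ⦃I J : Set (A → F)⦄ (hI : NIndep E hE I) (hIfin : I.Finite)
    (hJ : NIndep E hE J) (hJfin : J.Finite) (hcard : I.ncard < J.ncard) :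
    ∃ e ∈ J, e ∉ I ∧ NIndep E hE (insert e I) := by
  classical
  by_contra hcon
  push_neg at hcon
  set ψ : (A → F) → ((A → F) →₀ F) ⧸ (W E hE) :=
    fun x => (W E hE).mkQ (Finsupp.single x 1) with hψ
  have hlc : ∀ l : (A → F) →₀ F,
      Finsupp.linearCombination F ψ l = (W E hE).mkQ l := by
    intro l
    rw [Finsupp.linearCombination_apply, Finsupp.sum]
    have hterm : ∀ x ∈ l.support, l x • ψ x = (W E hE).mkQ (Finsupp.single x (l x)) := by
      intro x _
      rw [hψ]
      simp only
      rw [← map_smul, Finsupp.smul_single, smul_eq_mul, mul_one]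
    rw [Finset.sum_congr rfl hterm, ← map_sum]
    congr 1
    have hs := Finsupp.sum_single l
    rwa [Finsupp.sum] at hs
  have hmap : ∀ (s : Set (A → F)), ∀ m ∈ Finsupp.supported F F s,
      (W E hE).mkQ m ∈ Submodule.span F (ψ '' s) := by
    intro s m hm
    have : Submodule.map (W E hE).mkQ (Finsupp.supported F F s) =
        Submodule.span F (ψ '' s) := by
      rw [Finsupp.supported_eq_span_single, Submodule.map_span, Set.image_image]
    rw [← this]
    exact Submodule.mem_map_of_mem hm
  have hJspan : ∀ e ∈ J, ψ e ∈ Submodule.span F (ψ '' I) := by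
    intro e heJ
    by_cases heI : e ∈ I
    · exact Submodule.subset_span (Set.mem_image_of_mem _ heI)
    · have hnd : ¬ Disjoint (Finsupp.supported F F (insert e I)) (W E hE) := by
        intro hd
        exact hcon e heJ heI ⟨Set.insert_subset (hJ.1 heJ) hI.1, hd⟩
      have hmem := single_mem_sup E hE hI.2 hnd
      rw [Submodule.mem_sup] at hmem
      obtain ⟨w, hw, b, hb, heq⟩ := hmem
      have : ψ e = (W E hE).mkQ b := by
        rw [hψ]
        simp only
        rw [← heq, map_add]
        have : (W E hE).mkQ w = 0 := by
          rw [Submodule.mkQ_apply, Submodule.Quotient.mk_eq_zero]; exact hw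
        rw [this, zero_add]
      rw [this]
      exact hmap I b hb
  have hspan : Submodule.span F (ψ '' J) ≤ Submodule.span F (ψ '' I) := by
    rw [Submodule.span_le]
    rintro _ ⟨e, heJ, rfl⟩
    exact hJspan e heJ
  haveI : Fintype I := hIfin.fintype
  haveI : Fintype J := hJfin.fintype
  haveI : FiniteDimensional F (Submodule.span F (ψ '' I)) :=
    FiniteDimensional.span_of_finite F (hIfin.image ψ)
  have hli : LinearIndependent F (ψ ∘ ((↑) : J → (A → F))) := by
    rw [linearIndependent_comp_subtype_iff, linearIndepOn_iff]
    intro l hl hl0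
    rw [hlc, Submodule.mkQ_apply, Submodule.Quotient.mk_eq_zero] at hl0
    exact Submodule.disjoint_def.1 hJ.2 l hl hl0
  have h1 : finrank F (Submodule.span F (ψ '' J)) = J.ncard := by
    rw [Set.image_eq_range, Set.ncard_eq_toFinset_card', Set.toFinset_card]
    exact finrank_span_eq_card hli
  have h2 : finrank F (Submodule.span F (ψ '' I)) ≤ I.ncard := by
    have := finrank_range_le_card (R := F) (fun x : I => ψ x)
    rw [Set.image_eq_range]
    refine this.trans ?_
    rw [Set.ncard_eq_toFinset_card', Set.toFinset_card]
  have h3 := Submodule.finrank_mono hspan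
  omega

/-- The auxiliary finitary matroid. -/
def N : Matroid (A → F) :=
  (IndepMatroid.ofFinitaryCardAugment E (NIndep E hE)
    (indep_empty := ⟨Set.empty_subset _, by
      rw [Finsupp.supported_empty]; exact disjoint_bot_left⟩)
    (indep_subset := fun I J hJ hIJ =>
      ⟨hIJ.trans hJ.1, hJ.2.mono_left (Finsupp.supported_mono hIJ)⟩)
    (indep_aug := nIndep_aug E hE)
    (indep_compact := fun S h => by
      constructor
      · intro x hx
        exact (h {x} (Set.singleton_subset_iff.2 hx) (Set.finite_singleton x)).1 rfl
      · rw [Submodule.disjoint_def]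
        intro l hl hlW
        have hsub : (↑l.support : Set (A → F)) ⊆ S := (Finsupp.mem_supported F l).1 hl
        exact Submodule.disjoint_def.1
          (h _ hsub l.support.finite_toSet).2 l
          ((Finsupp.mem_supported F l).2 subset_rfl) hlW)
    (subset_ground := fun I h => h.1)).matroid

@[simp] lemma N_E : (N E hE).E = E := by
  rfl

@[simp] lemma N_indep {S : Set (A → F)} : (N E hE).Indep S ↔ NIndep E hE S := by
  exact Iff.rfl

lemma N_base_iff {B : Set (A → F)} :
    (N E hE).IsBase B ↔ NIndep E hE B ∧
      Finsupp.supported F F E ≤ W E hE ⊔ Finsupp.supported F F B := by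
  classical
  rw [Matroid.isBase_iff_maximal_indep]
  constructor
  · rintro ⟨hB, hmax⟩
    rw [N_indep] at hB
    refine ⟨hB, ?_⟩
    rw [Finsupp.supported_eq_span_single, Submodule.span_le]
    rintro _ ⟨x, hxE, rfl⟩
    by_cases hxB : x ∈ B
    · exact Submodule.mem_sup_right (Finsupp.single_mem_supported F 1 hxB)
    · have hnind : ¬ (N E hE).Indep (insert x B) := by
        intro hind
        exact hxB (hmax hind (Set.subset_insert _ _) (Set.mem_insert _ _))
      rw [N_indep] at hnind
      have hnd : ¬ Disjoint (Finsupp.supported F F (insert x B)) (W E hE) := by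
        intro hd
        exact hnind ⟨Set.insert_subset hxE hB.1, hd⟩
      exact single_mem_sup E hE hB.2 hnd
  · rintro ⟨hB, hle⟩
    refine ⟨(N_indep E hE).2 hB, ?_⟩
    intro C hC hBC
    rw [N_indep] at hC
    intro x hxC
    have hxE : x ∈ E := hC.1 hxC
    have h1 := hle (Finsupp.single_mem_supported F (1 : F) hxE)
    rw [Submodule.mem_sup] at h1
    obtain ⟨w, hw, b, hb, heq⟩ := h1
    have hwsupp : w ∈ Finsupp.supported F F C := by
      have hw' : w = Finsupp.single x 1 - b := by
        rw [← heq]; abel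
      rw [Finsupp.mem_supported, hw']
      refine (Finset.coe_subset.2 Finsupp.support_sub).trans ?_
      rw [Finset.coe_union]
      refine Set.union_subset ?_ ?_
      · refine (Finset.coe_subset.2 Finsupp.support_single_subset).trans ?_
        simpa using hxC
      · exact ((Finsupp.mem_supported F b).1 hb).trans hBC
    have hw0 : w = 0 := Submodule.disjoint_def.1 hC.2 w hwsupp hw
    have hbx : b = Finsupp.single x 1 := by rw [← heq, hw0, zero_add]
    have : x ∈ (↑b.support : Set (A → F)) := by
      rw [hbx]
      simp [Finsupp.support_single_ne_zero x (one_ne_zero (α := F))]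
    exact (Finsupp.mem_supported F b).1 hb this

lemma exists_base_of_cond {I : Set (A → F)} (hC : Cond E hE I) :
    ∃ B, (N E hE).IsBase B ∧ B ⊆ E \ I := by
  obtain ⟨B, hBbasis⟩ := (N E hE).exists_isBasis (E \ I)
    (by rw [N_E]; exact Set.diff_subset)
  have hBind : NIndep E hE B := (N_indep E hE).1 hBbasis.indep
  have hstep : Finsupp.supported F F (E \ I) ≤ W E hE ⊔ Finsupp.supported F F B := by
    rw [Finsupp.supported_eq_span_single, Submodule.span_le]
    rintro _ ⟨y, hy, rfl⟩
    by_cases hyB : y ∈ B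
    · exact Submodule.mem_sup_right (Finsupp.single_mem_supported F 1 hyB)
    · have hdep := hBbasis.insert_dep ⟨hy, hyB⟩
      have hnind := hdep.not_indep
      rw [N_indep] at hnind
      have hnd : ¬ Disjoint (Finsupp.supported F F (insert y B)) (W E hE) := by
        intro hd
        exact hnind ⟨Set.insert_subset hy.1 (hBbasis.subset.trans Set.diff_subset), hd⟩
      exact single_mem_sup E hE hBind.2 hnd
  refine ⟨B, ?_, hBbasis.subset⟩
  rw [N_base_iff]
  exact ⟨hBind, hC.trans (sup_le le_sup_left hstep)⟩

lemma cond_of_base {I B : Set (A → F)} (hI : I ⊆ E) (hB : (N E hE).IsBase B)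
    (hdisj : Disjoint I B) : Cond E hE I := by
  rw [N_base_iff] at hB
  refine hB.2.trans (sup_le le_sup_left ?_)
  refine (Finsupp.supported_mono ?_).trans le_sup_right
  rw [Set.subset_diff]
  exact ⟨hB.1.1, hdisj.symm⟩

set_option maxHeartbeats 1000000 in
lemma cond_iff_thinIndep {I : Set (A → F)} (hI : I ⊆ E) :
    Cond E hE I ↔ ThinIndep I := by
  classical
  constructor
  · intro hC X hXI hXthin α hsum x₀ hx₀
    set g := Finsupp.linearCombination F (X.indicator α) with hg
    have hXE : X ⊆ E := hXI.trans hI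
    have hg1 : ∀ a, g (phi E hE a) = 0 := by
      intro a
      have hcong := congrFun hsum a
      rw [Pi.zero_apply, finsum_eq hXthin] at hcong
      rw [phi, map_sum]
      have hsub : (hXthin a).toFinset ⊆ (hE a).toFinset := by
        intro y hy
        rw [Set.Finite.mem_toFinset] at hy ⊢
        exact ⟨hXE hy.1, hy.2⟩
      calc ∑ x ∈ (hE a).toFinset, g ((x a) • Finsupp.single x 1)
          = ∑ x ∈ (hXthin a).toFinset, g ((x a) • Finsupp.single x 1) := by
            refine (Finset.sum_subset hsub ?_).symm
            intro x hxE' hxX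
            rw [Set.Finite.mem_toFinset] at hxE' hxX
            have hxnX : x ∉ X := fun h => hxX ⟨h, hxE'.2⟩
            rw [map_smul, hg, Finsupp.linearCombination_single, one_smul,
              Set.indicator_of_notMem hxnX, smul_zero]
        _ = ∑ x ∈ (hXthin a).toFinset, α x * x a := by
            refine Finset.sum_congr rfl fun x hx => ?_
            rw [Set.Finite.mem_toFinset] at hx
            rw [map_smul, hg, Finsupp.linearCombination_single, one_smul,
              Set.indicator_of_mem hx.1, smul_eq_mul, mul_comm]
        _ = 0 := hcong
    have hker : W E hE ⊔ Finsupp.supported F F (E \ I) ≤ LinearMap.ker g := by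
      refine sup_le ?_ ?_
      · rw [W, Submodule.span_le]
        rintro _ ⟨a, rfl⟩
        exact LinearMap.mem_ker.2 (hg1 a)
      · rw [Finsupp.supported_eq_span_single, Submodule.span_le]
        rintro _ ⟨y, hy, rfl⟩
        have hynX : y ∉ X := fun h => hy.2 (hXI h)
        refine LinearMap.mem_ker.2 ?_
        rw [hg, Finsupp.linearCombination_single, one_smul,
          Set.indicator_of_notMem hynX]
    have hx₀E : x₀ ∈ E := hXE hx₀
    have := (hC.trans hker) (Finsupp.single_mem_supported F (1 : F) hx₀E)
    rw [LinearMap.mem_ker, hg, Finsupp.linearCombination_single, one_smul,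
      Set.indicator_of_mem hx₀] at this
    exact this
  · intro hTI
    by_contra hC
    rw [Cond, SetLike.le_def] at hC
    push_neg at hC
    obtain ⟨v, hvE, hvU⟩ := hC
    obtain ⟨g, hgU, hgv⟩ := exists_dual_of_not_mem hvU
    set α : (A → F) → F := fun x => g (Finsupp.single x 1) with hα
    have hIthin : Thin I := thin_of_subset E hE hI
    have hsum : (fun a => ∑ᶠ x ∈ I, α x * x a) = 0 := by
      funext a
      rw [finsum_eq hIthin]
      have hsub : (hIthin a).toFinset ⊆ (hE a).toFinset := by
        intro y hy
        rw [Set.Finite.mem_toFinset] at hy ⊢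
        exact ⟨hI hy.1, hy.2⟩
      have hterm : ∀ x ∈ (hIthin a).toFinset,
          α x * x a = g ((x a) • Finsupp.single x 1) := by
        intro x _
        rw [map_smul, smul_eq_mul, mul_comm]
      rw [Finset.sum_congr rfl hterm, ← map_sum]
      have hdecomp : ∑ x ∈ (hIthin a).toFinset, (x a) • Finsupp.single x (1 : F) =
          phi E hE a - ∑ x ∈ (hE a).toFinset \ (hIthin a).toFinset,
            (x a) • Finsupp.single x (1 : F) := by
        rw [eq_sub_iff_add_eq, add_comm, phi]
        exact Finset.sum_sdiff hsub
      rw [hdecomp, map_sub]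
      have hphi0 : g (phi E hE a) = 0 :=
        hgU _ (Submodule.mem_sup_left (Submodule.subset_span ⟨a, rfl⟩))
      have hrest0 : g (∑ x ∈ (hE a).toFinset \ (hIthin a).toFinset,
          (x a) • Finsupp.single x (1 : F)) = 0 := by
        refine hgU _ (Submodule.mem_sup_right ?_)
        refine Submodule.sum_mem _ fun x hx => ?_
        rw [Finset.mem_sdiff, Set.Finite.mem_toFinset, Set.Finite.mem_toFinset] at hx
        have hxEI : x ∈ E \ I := ⟨hx.1.1, fun h => hx.2 ⟨h, hx.1.2⟩⟩
        exact Submodule.smul_mem _ _ (Finsupp.single_mem_supported F 1 hxEI)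
      rw [hphi0, hrest0, sub_zero]
      rfl
    have hzero := hTI I subset_rfl hIthin α hsum
    apply hgv
    have hker : Finsupp.supported F F E ≤ LinearMap.ker g := by
      rw [Finsupp.supported_eq_span_single, Submodule.span_le]
      rintro _ ⟨x, hxE, rfl⟩
      refine LinearMap.mem_ker.2 ?_
      by_cases hxI : x ∈ I
      · exact hzero x hxI
      · exact hgU _ (Submodule.mem_sup_right
          (Finsupp.single_mem_supported F 1 ⟨hxE, hxI⟩))
    exact hker hvE

end

end ThinSumsAux

/-- If `E` is a thin set of functions `A → F`, then the thinly independent subsets of `E`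
are the independent sets of a matroid on `E`: the thin-sums matroid. -/
theorem thin_sums_matroid_exists [Field F] (E : Set (A → F)) (hE : Thin E) :
    ∃ M : Matroid (A → F), M.E = E ∧
      ∀ I : Set (A → F), M.Indep I ↔ I ⊆ E ∧ ThinIndep I := by
  classical
  refine ⟨(ThinSumsAux.N E hE)✶, by rw [Matroid.dual_ground, ThinSumsAux.N_E], ?_⟩
  intro I
  rw [Matroid.dual_indep_iff_exists', ThinSumsAux.N_E]
  constructor
  · rintro ⟨hIE, B, hB, hdisj⟩
    refine ⟨hIE, ?_⟩
    rw [← ThinSumsAux.cond_iff_thinIndep E hE hIE]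
    exact ThinSumsAux.cond_of_base E hE hIE hB hdisj
  · rintro ⟨hIE, hTI⟩
    refine ⟨hIE, ?_⟩
    obtain ⟨B, hB, hBsub⟩ := ThinSumsAux.exists_base_of_cond E hE
      ((ThinSumsAux.cond_iff_thinIndep E hE hIE).2 hTI)
    exact ⟨B, hB, Set.disjoint_of_subset_right hBsub Set.disjoint_sdiff_right⟩
end

section
/- Let F be a field, A a set, and E a thin set of functions A → F. For every thinly independent set I ⊆ X ⊆ E there exists a thinly independent set B with I ⊆ B ⊆ X and X ⊆ ⟨B⟩. -/
variable {A F : Type*}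

/-- For `E` thin and any thinly independent `I ⊆ X ⊆ E`, there is a thinly independent
set `B` with `I ⊆ B ⊆ X` and `X ⊆ ⟨B⟩`. -/
theorem exists_thin_basis_between [Field F] (E X I : Set (A → F)) (hE : Thin E)
    (hIX : I ⊆ X) (hXE : X ⊆ E) (hI : ThinIndep I) :
    ∃ B : Set (A → F), ThinIndep B ∧ I ⊆ B ∧ B ⊆ X ∧ X ⊆ thinSpan B := by
  classical
  -- any subset of `E` is thin
  have hthin : ∀ Y : Set (A → F), Y ⊆ E → Thin Y := fun Y hY a =>
    (hE a).subset fun x hx => ⟨hY hx.1, hx.2⟩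
  -- the coordinate functionals are finitely supported on `X`
  have hXa : ∀ a : A, {z : ↥X | (z : A → F) a ≠ 0}.Finite := by
    intro a
    have h1 : {z : ↥X | (z : A → F) a ≠ 0} ⊆ Subtype.val ⁻¹' {x ∈ E | x a ≠ 0} :=
      fun z hz => ⟨hXE z.2, hz⟩
    exact (Set.Finite.preimage Subtype.val_injective.injOn (hE a)).subset h1
  set w : A → (↥X →₀ F) := fun a => Finsupp.onFinset (hXa a).toFinset
      (fun z => (z : A → F) a) (fun z hz => (hXa a).mem_toFinset.2 hz) with hw
  have hw_apply : ∀ (a : A) (z : ↥X), w a z = (z : A → F) a := fun a z => rfl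
  set e : ↥X → (↥X →₀ F) := fun z => Finsupp.single z 1 with he
  -- key computation: linear combinations of values of a linear functional at `e z`
  have hLC : ∀ (g : (↥X →₀ F) →ₗ[F] F) (v : ↥X →₀ F),
      Finsupp.linearCombination F (fun z => g (e z)) v = g v := by
    intro g v
    rw [Finsupp.linearCombination_apply]
    have h1 : (v.sum fun z r => r • g (e z)) = v.sum fun z r => g (Finsupp.single z r) := by
      refine Finsupp.sum_congr fun z _ => ?_
      rw [← map_smul, he, Finsupp.smul_single', mul_one]
    rw [h1, ← map_finsuppSum, Finsupp.sum_single]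
  -- bridge between `finsum` over subsets of `X` and `Finsupp.linearCombination`
  have hBRIDGE : ∀ (Y : Set (A → F)), Y ⊆ X → ∀ (α : (A → F) → F) (β : ↥X → F),
      (∀ z : ↥X, ((z : A → F) ∈ Y → β z = α z) ∧ ((z : A → F) ∉ Y → β z = 0)) → ∀ (a : A),
      (∑ᶠ f ∈ Y, α f * f a) = Finsupp.linearCombination F β (w a) := by
    intro Y hY α β hβ a
    letI : DecidableEq (A → F) := Classical.decEq _
    have hβ' : β = fun z : ↥X => if (z : A → F) ∈ Y then α z else 0 := by
      funext z
      by_cases hz : (z : A → F) ∈ Y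
      · rw [if_pos hz]; exact (hβ z).1 hz
      · rw [if_neg hz]; exact (hβ z).2 hz
    rw [hβ', Finsupp.linearCombination_apply, Finsupp.sum]
    have hRHS : (∑ z ∈ (w a).support, (w a) z • (if (z : A → F) ∈ Y then α ↑z else 0))
        = ∑ z ∈ (w a).support.filter (fun z : ↥X => (z : A → F) ∈ Y), α ↑z * (z : A → F) a := by
      rw [Finset.sum_filter]
      refine Finset.sum_congr rfl fun z _ => ?_
      by_cases h : (z : A → F) ∈ Y <;> simp [h, hw_apply, mul_comm]
    rw [hRHS]
    have h2 : (∑ z ∈ (w a).support.filter (fun z : ↥X => (z : A → F) ∈ Y), α ↑z * (z : A → F) a)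
        = ∑ f ∈ ((w a).support.filter (fun z : ↥X => (z : A → F) ∈ Y)).image
            (Subtype.val : ↥X → (A → F)), α f * f a :=
      (Finset.sum_image (f := fun (u : A → F) => α u * u a) (g := (Subtype.val : ↥X → (A → F)))
        (fun x _ y _ h => Subtype.val_injective h)).symm
    rw [h2]
    apply finsum_mem_eq_sum_of_inter_support_eq
    ext f
    simp only [Set.mem_inter_iff, Function.mem_support, Finset.coe_image, Set.mem_image,
      Finset.mem_coe, Finset.mem_filter, Finsupp.mem_support_iff]
    constructor
    · rintro ⟨hfY, hf0⟩
      have hfa : f a ≠ 0 := fun h => hf0 (by rw [h, mul_zero])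
      exact ⟨⟨⟨f, hY hfY⟩, ⟨by simpa [hw_apply] using hfa, hfY⟩, rfl⟩, hf0⟩
    · rintro ⟨⟨z, ⟨hz0, hzY⟩, rfl⟩, hf0⟩
      exact ⟨hzY, hf0⟩
  -- the span of all coordinate functionals
  set W : Submodule F (↥X →₀ F) := Submodule.span F (Set.range w) with hW
  have hwW : ∀ a, w a ∈ W := fun a => Submodule.subset_span ⟨a, rfl⟩
  -- thin independence of `I` means: `e`-vectors outside `I` together with `W` span everything
  have hspanI : Submodule.span F
      ((e '' {z : ↥X | (z : A → F) ∉ I}) ∪ Set.range w) = ⊤ := by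
    by_contra hne
    set U := Submodule.span F ((e '' {z : ↥X | (z : A → F) ∉ I}) ∪ Set.range w) with hU
    obtain ⟨v, hv⟩ : ∃ v, v ∉ U := by
      by_contra h; push_neg at h; exact hne (Submodule.eq_top_iff'.mpr h)
    have hqv : U.mkQ v ≠ 0 := by
      rw [Submodule.mkQ_apply, Ne, Submodule.Quotient.mk_eq_zero]; exact hv
    set bQ := Module.Basis.ofVectorSpace F ((↥X →₀ F) ⧸ U) with hbQ
    obtain ⟨i, hi⟩ : ∃ i, bQ.repr (U.mkQ v) i ≠ 0 := by
      by_contra h; push_neg at h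
      exact hqv ((LinearEquiv.map_eq_zero_iff bQ.repr).1 (Finsupp.ext h))
    set f : (↥X →₀ F) →ₗ[F] F := (bQ.coord i).comp U.mkQ with hf
    have hfU : ∀ u ∈ U, f u = 0 := by
      intro u hu
      have : U.mkQ u = 0 := by rw [Submodule.mkQ_apply, Submodule.Quotient.mk_eq_zero]; exact hu
      simp [hf, this]
    have hfw : ∀ a, f (w a) = 0 := fun a =>
      hfU _ (Submodule.subset_span (Set.mem_union_right _ ⟨a, rfl⟩))
    have hfz : ∀ z : ↥X, (z : A → F) ∉ I → f (e z) = 0 := fun z hz =>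
      hfU _ (Submodule.subset_span (Set.mem_union_left _ ⟨z, hz, rfl⟩))
    set αI : (A → F) → F := fun g => if h : g ∈ X then f (e ⟨g, h⟩) else 0 with hαI
    have hIe : ∀ z : ↥X, (z : A → F) ∈ I → αI z = f (e z) := by
      intro z _
      simp only [hαI]
      rw [dif_pos z.2, Subtype.coe_eta]
    have hsum0 : (fun a => ∑ᶠ g ∈ I, αI g * g a) = 0 := by
      funext a
      have hcompat : ∀ z : ↥X, ((z : A → F) ∈ I → f (e z) = αI z) ∧
          ((z : A → F) ∉ I → f (e z) = 0) := by
        intro z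
        exact ⟨fun hz => (hIe z hz).symm, fun hz => hfz z hz⟩
      rw [hBRIDGE I hIX αI (fun z => f (e z)) hcompat a, hLC f (w a), hfw a, Pi.zero_apply]
    have hα0 := hI I subset_rfl (hthin I (fun g hg => hXE (hIX hg))) αI hsum0
    have hfe : ∀ z : ↥X, f (e z) = 0 := by
      intro z
      by_cases hz : (z : A → F) ∈ I
      · rw [← hIe z hz]; exact hα0 _ hz
      · exact hfz z hz
    have : f v = 0 := by
      rw [← hLC f v]
      have : (fun z : ↥X => f (e z)) = fun _ => 0 := funext hfe
      rw [this]
      simp [Finsupp.linearCombination_apply, Finsupp.sum]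
    rw [hf] at this
    simp only [LinearMap.coe_comp, Function.comp_apply, Module.Basis.coord_apply] at this
    exact hi this
  -- extract an independent spanning set for `W`, and extend it by `e`-vectors outside `I`
  obtain ⟨sW, hsWsub, hsWspan, hsWind⟩ := exists_linearIndependent F (Set.range w)
  set t : Set (↥X →₀ F) := sW ∪ (e '' {z : ↥X | (z : A → F) ∉ I}) with ht
  obtain ⟨b, hbt, hsWb, htb, hbind⟩ :=
    exists_linearIndepOn_id_extension hsWind (Set.subset_union_left (t := e '' {z : ↥X | (z : A → F) ∉ I}))
  have hspant : Submodule.span F t = ⊤ := by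
    rw [eq_top_iff, ← hspanI]
    refine Submodule.span_le.2 (Set.union_subset ?_ ?_)
    · exact fun v hv => Submodule.subset_span (Set.mem_union_right _ hv)
    · intro v hv
      have : v ∈ Submodule.span F sW := hsWspan ▸ Submodule.subset_span hv
      exact Submodule.span_mono Set.subset_union_left this
    -- nothing
  have hspanb : (⊤ : Submodule F (↥X →₀ F)) ≤ Submodule.span F b := by
    rw [← hspant]; exact Submodule.span_le.2 htb
  -- the complement index set
  set C : Set ↥X := {z : ↥X | (z : A → F) ∉ I ∧ e z ∈ b ∧ e z ∉ Submodule.span F sW} with hC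
  set B : Set (A → F) := X \ (Subtype.val '' C) with hB
  have hBX : B ⊆ X := Set.diff_subset
  have hIB : I ⊆ B := by
    intro g hg
    refine ⟨hIX hg, ?_⟩
    rintro ⟨z, hzC, rfl⟩
    exact hzC.1 hg
  have hzB : ∀ z : ↥X, (z : A → F) ∈ B ↔ z ∉ C := by
    intro z
    constructor
    · intro hzb hzc; exact hzb.2 ⟨z, hzc, rfl⟩
    · intro h
      refine ⟨z.2, ?_⟩
      rintro ⟨z', hz', hval⟩
      exact h (by rwa [Subtype.val_injective hval] at hz')
  have hsWspan' : Submodule.span F sW = W := hW ▸ hsWspan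
  -- sup
  have hsupCW : Submodule.span F (e '' C) ⊔ W = ⊤ := by
    rw [eq_top_iff]
    refine le_trans hspanb (Submodule.span_le.2 ?_)
    intro v hvb
    by_cases hv : v ∈ Submodule.span F sW
    · exact Submodule.mem_sup_right (hsWspan' ▸ hv)
    · rcases hbt hvb with hvs | hve
      · exact absurd (Submodule.subset_span hvs) hv
      · rcases hve with ⟨z, hzI, rfl⟩
        exact Submodule.mem_sup_left (Submodule.subset_span ⟨z, ⟨hzI, hvb, hv⟩, rfl⟩)
  -- disjointness
  have heCb : e '' C ⊆ b := by rintro _ ⟨z, hz, rfl⟩; exact hz.2.1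
  have hdisjCW : Disjoint (Submodule.span F (e '' C)) W := by
    rw [← hsWspan']
    have hd : Disjoint {i : ↥b | (i : ↥X →₀ F) ∈ e '' C} {i : ↥b | (i : ↥X →₀ F) ∈ sW} := by
      rw [Set.disjoint_left]
      rintro i ⟨z, hz, hze⟩ hi2
      exact hz.2.2 (hze ▸ Submodule.subset_span hi2)
    have := LinearIndependent.disjoint_span_image (v := fun x : b => (x : ↥X →₀ F)) hbind hd
    rwa [Subtype.coe_image_of_subset heCb, Subtype.coe_image_of_subset hsWb] at this
  have hcompl : IsCompl (Submodule.span F (e '' C)) W := ⟨hdisjCW, codisjoint_iff.2 hsupCW⟩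
  set π := (Submodule.span F (e '' C)).linearProjOfIsCompl W hcompl with hπ
  refine ⟨B, ?_, hIB, hBX, ?_⟩
  · -- thin independence of B
    intro Y hYB hYthin α hsum x hx
    set β : ↥X → F := fun z => if (z : A → F) ∈ Y then α z else 0 with hβ
    set φ := Finsupp.linearCombination F β with hφ
    have hφw : ∀ a, φ (w a) = 0 := by
      intro a
      rw [hφ, ← hBRIDGE Y (hYB.trans hBX) α β (fun z => ⟨fun hz => by simp only [hβ, if_pos hz], fun hz => by simp only [hβ, if_neg hz]⟩) a]
      exact congrFun hsum a
    have hφe : ∀ z : ↥X, φ (e z) = β z := by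
      intro z
      rw [hφ, he]
      simp [Finsupp.linearCombination_single]
    have hker : Submodule.span F (e '' C) ⊔ W ≤ LinearMap.ker φ := by
      refine sup_le (Submodule.span_le.2 ?_) ?_
      · rintro _ ⟨z, hz, rfl⟩
        have hzY : (z : A → F) ∉ Y := fun hy => ((hzB z).1 (hYB hy)) hz
        rw [SetLike.mem_coe, LinearMap.mem_ker, hφe z]
        simp only [hβ]
        exact if_neg hzY
      · rw [hW]
        refine Submodule.span_le.2 ?_
        rintro _ ⟨a, rfl⟩
        rw [SetLike.mem_coe, LinearMap.mem_ker]
        exact hφw a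
    have hφ0 : ∀ v, φ v = 0 := by
      intro v
      have : v ∈ LinearMap.ker φ := hker (hsupCW ▸ Submodule.mem_top)
      exact this
    have hxX : x ∈ X := hBX (hYB hx)
    have h1 : β ⟨x, hxX⟩ = 0 := by rw [← hφe ⟨x, hxX⟩]; exact hφ0 _
    rw [hβ] at h1
    simpa [hx] using h1
  · -- X ⊆ thinSpan B
    intro x₀ hx₀
    set x₀' : ↥X := ⟨x₀, hx₀⟩ with hx₀'
    set ψ : (↥X →₀ F) →ₗ[F] F :=
      (Finsupp.lapply x₀').comp ((Submodule.span F (e '' C)).subtype.comp π) with hψ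
    have hψw : ∀ a, ψ (w a) = 0 := by
      intro a
      rw [hψ]
      simp only [LinearMap.coe_comp, Function.comp_apply]
      rw [hπ, show (Submodule.span F (e '' C)).linearProjOfIsCompl W hcompl (w a) = 0 from
        Submodule.linearProjOfIsCompl_apply_right' hcompl (hwW a)]
      simp
    have hψe : ∀ z ∈ C, ψ (e z) = (e z) x₀' := by
      intro z hz
      have hm : e z ∈ Submodule.span F (e '' C) := Submodule.subset_span ⟨z, hz, rfl⟩
      have h2 : π (e z) = ⟨e z, hm⟩ :=
        Submodule.linearProjOfIsCompl_apply_left hcompl ⟨e z, hm⟩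
      rw [hψ]
      simp only [LinearMap.coe_comp, Function.comp_apply]
      rw [h2]
      simp
    set c' : ↥X → F := fun z => (if z = x₀' then 1 else 0) - ψ (e z) with hc'
    have hc'C : ∀ z ∈ C, c' z = 0 := by
      intro z hz
      simp only [hc']
      rw [hψe z hz, he]
      simp [Finsupp.single_apply]
    set α : (A → F) → F := fun g => if h : g ∈ X then c' ⟨g, h⟩ else 0 with hα
    refine ⟨B, α, subset_rfl, hthin B (hBX.trans hXE), ?_⟩
    funext a
    have hcompat : ∀ z : ↥X, ((z : A → F) ∈ B → c' z = α z) ∧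
        ((z : A → F) ∉ B → c' z = 0) := by
      intro z
      constructor
      · intro hzb
        simp only [hα]
        rw [dif_pos z.2, Subtype.coe_eta]
      · intro hzb
        have hz : z ∈ C := by
          by_contra hc
          exact hzb ((hzB z).2 hc)
        exact hc'C z hz
    rw [hBRIDGE B hBX α c' hcompat a]
    -- compute the linear combination
    rw [Finsupp.linearCombination_apply, Finsupp.sum]
    have hsplit : (∑ z ∈ (w a).support, (w a) z • c' z)
        = (∑ z ∈ (w a).support, (w a) z • (if z = x₀' then (1:F) else 0))
          - ∑ z ∈ (w a).support, (w a) z • ψ (e z) := by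
      rw [← Finset.sum_sub_distrib]
      refine Finset.sum_congr rfl fun z _ => ?_
      rw [hc', smul_sub]
    rw [hsplit]
    have hterm2 : (∑ z ∈ (w a).support, (w a) z • ψ (e z)) = 0 := by
      have : (∑ z ∈ (w a).support, (w a) z • ψ (e z))
          = Finsupp.linearCombination F (fun z => ψ (e z)) (w a) := by
        rw [Finsupp.linearCombination_apply, Finsupp.sum]
      rw [this, hLC ψ (w a), hψw a]
    have hterm1 : (∑ z ∈ (w a).support, (w a) z • (if z = x₀' then (1:F) else 0))
        = x₀ a := by
      have h1 : (∑ z ∈ (w a).support, (w a) z • (if z = x₀' then (1:F) else 0))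
          = ∑ z ∈ (w a).support, (if z = x₀' then (w a) z else 0) := by
        refine Finset.sum_congr rfl fun z _ => ?_
        by_cases h : z = x₀' <;> simp [h]
      rw [h1, Finset.sum_ite_eq' (w a).support x₀' (w a)]
      by_cases h : x₀' ∈ (w a).support
      · rw [if_pos h]; exact hw_apply a x₀'
      · rw [if_neg h]
        have h0 := Finsupp.notMem_support_iff.1 h
        exact h0.symm.trans (hw_apply a x₀')
    rw [hterm1, hterm2, sub_zero]
end

section
/- Let G be a graph and map each edge e = uv of G to the function V(G) → 𝔽₂ that is 1 exactly on u and v (and 0 elsewhere, with loops mapping to the zero function). A set F of edges is thinly independent (as a set of V(G) → 𝔽₂ functions) if and only if F contains no elementary algebraic cycle of G, i.e., F contains neither the edge set of a finite cycle nor the edge set of a double ray. -/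
variable {V : Type*} [DecidableEq V]

/-- The function `V → 𝔽₂` representing an edge: `1` exactly on its endvertices. -/
def edgeFun (e : Sym2 V) : V → ZMod 2 :=
  fun v => if v ∈ e then 1 else 0

/-- A set `F` of edges, viewed as a set of `V → 𝔽₂` functions, is thinly independent:
for every subset `X ⊆ F` such that every vertex lies in only finitely many edges of `X`,
the pointwise sum of the corresponding functions vanishes only if `X = ∅`. -/
def ThinIndepEdges (F : Set (Sym2 V)) : Prop :=
  ∀ X : Set (Sym2 V), X ⊆ F → (∀ v : V, {e ∈ X | v ∈ e}.Finite) →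
    (fun v => ∑ᶠ e ∈ X, edgeFun e v) = (0 : V → ZMod 2) → X = ∅

/-- The edge set of a finite cycle of `G`. -/
def IsFiniteCycleEdgeSet (G : SimpleGraph V) (C : Set (Sym2 V)) : Prop :=
  ∃ (v : V) (w : G.Walk v v), w.IsCycle ∧ C = {e | e ∈ w.edges}

/-- The edge set of a double ray (2-way infinite path) of `G`. -/
def IsDoubleRayEdgeSet (G : SimpleGraph V) (C : Set (Sym2 V)) : Prop :=
  ∃ f : ℤ → V, Function.Injective f ∧ (∀ i : ℤ, G.Adj (f i) (f (i + 1))) ∧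
    C = {e | ∃ i : ℤ, e = s(f i, f (i + 1))}

/-- An elementary algebraic cycle of `G`: the edge set of a finite cycle or of a double ray. -/
def IsElemAlgCycle (G : SimpleGraph V) (C : Set (Sym2 V)) : Prop :=
  IsFiniteCycleEdgeSet G C ∨ IsDoubleRayEdgeSet G C

lemma finsum_edgeFun_eq {X : Set (Sym2 V)} {v : V} (hfin : {e ∈ X | v ∈ e}.Finite) :
    ∑ᶠ e ∈ X, edgeFun e v = ((hfin.toFinset.card : ℕ) : ZMod 2) := by
  have hsupp : X ∩ Function.support (fun e => edgeFun e v) = ↑hfin.toFinset ∩ Function.support (fun e => edgeFun e v) := by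
    ext e
    simp only [Set.mem_inter_iff, Function.mem_support, Finset.coe_sort_coe,
      Set.Finite.coe_toFinset, Set.mem_setOf_eq, edgeFun]
    constructor
    · rintro ⟨hX, hne⟩
      have hv : v ∈ e := by by_contra hv; simp [hv] at hne
      exact ⟨⟨hX, hv⟩, hne⟩
    · rintro ⟨⟨hX, _⟩, hne⟩
      exact ⟨hX, hne⟩
  rw [finsum_mem_eq_sum_of_inter_support_eq _ hsupp]
  rw [Finset.sum_congr rfl (fun e he => ?_), Finset.sum_const, nsmul_eq_mul, mul_one]
  have hv : v ∈ e := (hfin.mem_toFinset.mp he).2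
  simp [edgeFun, hv]
open SimpleGraph

def walkFrom (G : SimpleGraph V) (g : ℕ → V) (hg : ∀ k, G.Adj (g k) (g (k + 1))) :
    (n : ℕ) → G.Walk (g 0) (g n)
  | 0 => .nil
  | (n + 1) => (walkFrom G g hg n).concat (hg n)

lemma walkFrom_edges (G : SimpleGraph V) (g : ℕ → V) (hg : ∀ k, G.Adj (g k) (g (k + 1)))
    (n : ℕ) : (walkFrom G g hg n).edges = (List.range n).map (fun k => s(g k, g (k + 1))) := by
  induction n with
  | zero => rfl
  | succ n ih =>
      rw [walkFrom, Walk.edges_concat, ih, List.range_succ, List.map_append, List.concat_eq_append]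
      rfl

lemma walkFrom_support (G : SimpleGraph V) (g : ℕ → V) (hg : ∀ k, G.Adj (g k) (g (k + 1)))
    (n : ℕ) : (walkFrom G g hg n).support = (List.range (n + 1)).map g := by
  induction n with
  | zero => rfl
  | succ n ih =>
      rw [walkFrom, Walk.support_concat, ih, List.range_succ (n := n + 1), List.map_append]
      rfl

lemma walkFrom_length (G : SimpleGraph V) (g : ℕ → V) (hg : ∀ k, G.Adj (g k) (g (k + 1)))
    (n : ℕ) : (walkFrom G g hg n).length = n := by
  induction n with
  | zero => rfl
  | succ n ih => rw [walkFrom, Walk.length_concat, ih]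

lemma isCycle_walkFrom (G : SimpleGraph V) (g : ℕ → V) (hg : ∀ k, G.Adj (g k) (g (k + 1)))
    (d : ℕ) (hd : 3 ≤ d) (hinj : ∀ p q, p < d → q < d → g p = g q → p = q)
    (hclose : g d = g 0) : ((walkFrom G g hg d).copy rfl hclose).IsCycle := by
  constructor
  · constructor
    · constructor
      rw [Walk.edges_copy, walkFrom_edges]
      refine List.Nodup.map_on ?_ List.nodup_range
      intro p hp q hq hpq
      simp only [List.mem_range] at hp hq
      rcases Sym2.eq_iff.mp hpq with ⟨h1, h2⟩ | ⟨h1, h2⟩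
      · exact hinj p q hp hq h1
      -- h1 : g p = g (q + 1), h2 : g (p + 1) = g q
      · by_contra hne
        rcases Nat.lt_or_ge (q + 1) d with hq1 | hq1
        · -- q + 1 < d
          have hpq1 : p = q + 1 := hinj p (q + 1) hp hq1 h1
          rcases Nat.lt_or_ge (p + 1) d with hp1 | hp1
          · have : p + 1 = q := hinj (p + 1) q hp1 hq h2
            omega
          · -- p + 1 = d
            have hpd : p + 1 = d := by omega
            have : g q = g 0 := by rw [← h2, hpd, hclose]
            have hq0 : q = 0 := hinj q 0 hq (by omega) this
            omega
        · -- q + 1 = d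
          have hqd : q + 1 = d := by omega
          have : g p = g 0 := by rw [h1, hqd, hclose]
          have hp0 : p = 0 := hinj p 0 hp (by omega) this
          rcases Nat.lt_or_ge (p + 1) d with hp1 | hp1
          · have : p + 1 = q := hinj (p + 1) q hp1 hq h2
            omega
          · omega
    · intro hnil
      have := congrArg Walk.length hnil
      rw [Walk.length_copy, walkFrom_length, Walk.length_nil] at this
      omega
  · rw [Walk.support_copy, walkFrom_support, List.range_succ_eq_map, List.map_cons, List.tail_cons,
      List.map_map]
    refine List.Nodup.map_on ?_ List.nodup_range
    intro p hp q hq hpq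
    simp only [List.mem_range, Function.comp_apply, Nat.succ_eq_add_one] at hp hq hpq
    rcases Nat.lt_or_ge (p + 1) d with hp1 | hp1
    · rcases Nat.lt_or_ge (q + 1) d with hq1 | hq1
      · exact Nat.succ_injective (hinj _ _ hp1 hq1 hpq)
      · have hqd : q + 1 = d := by omega
        have : g (p + 1) = g 0 := by rw [hpq, hqd, hclose]
        have := hinj (p + 1) 0 hp1 (by omega) this
        omega
    · have hpd : p + 1 = d := by omega
      rcases Nat.lt_or_ge (q + 1) d with hq1 | hq1
      · have : g (q + 1) = g 0 := by rw [← hpq, hpd, hclose]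
        have := hinj (q + 1) 0 hq1 (by omega) this
        omega
      · omega
lemma exists_cycle_of_even (G : SimpleGraph V) (X : Set (Sym2 V)) (hX : X ⊆ G.edgeSet)
    (hfin : ∀ v : V, {e ∈ X | v ∈ e}.Finite)
    (heven : ∀ v : V, Even (hfin v).toFinset.card)
    (hne : X.Nonempty) :
    ∃ C, C ⊆ X ∧ IsElemAlgCycle G C := by
  classical
  -- extension: any endpoint of an edge of `X` lies on another edge of `X`
  have hext : ∀ (v : V) (e : Sym2 V), e ∈ X → v ∈ e → ∃ e', e' ∈ X ∧ v ∈ e' ∧ e' ≠ e := by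
    intro v e he hv
    by_contra h
    push_neg at h
    have hsingle : (hfin v).toFinset = {e} := by
      ext e'
      simp only [Set.Finite.mem_toFinset, Set.mem_setOf_eq, Finset.mem_singleton]
      constructor
      · rintro ⟨h1, h2⟩; exact h e' h1 h2
      · rintro rfl; exact ⟨he, hv⟩
    have := heven v
    rw [hsingle, Finset.card_singleton] at this
    exact (Nat.not_even_one) this
  obtain ⟨e₀, he₀⟩ := hne
  induction e₀ using Sym2.ind with
  | _ a b =>
  -- states: current vertex together with the edge just used
  set S := {p : V × Sym2 V // p.2 ∈ X ∧ p.1 ∈ p.2} with hS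
  have hstep : ∀ p : S, ∃ q : S, q.1.2 ≠ p.1.2 ∧ s(p.1.1, q.1.1) = q.1.2 := by
    rintro ⟨⟨v, e⟩, he, hv⟩
    obtain ⟨e', he', hv', hne'⟩ := hext v e he hv
    exact ⟨⟨(Sym2.Mem.other' hv', e'), he', Sym2.other_mem' hv'⟩, hne', Sym2.other_spec' hv'⟩
  choose step hstep1 hstep2 using hstep
  have hb : b ∈ s(a, b) := by simp
  have ha : a ∈ s(a, b) := by simp
  set p0 : S := ⟨(b, s(a, b)), he₀, hb⟩ with hp0
  set q0 : S := ⟨(a, s(a, b)), he₀, ha⟩ with hq0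
  set Fw : ℕ → S := fun n => step^[n] p0 with hFw
  set Bw : ℕ → S := fun n => step^[n] q0 with hBw
  have hFwsucc : ∀ n, Fw (n + 1) = step (Fw n) := by
    intro n; simp [hFw, Function.iterate_succ_apply']
  have hBwsucc : ∀ n, Bw (n + 1) = step (Bw n) := by
    intro n; simp [hBw, Function.iterate_succ_apply']
  -- the two-way infinite vertex sequence
  set f : ℤ → V := fun n => if 0 ≤ n then (Fw n.toNat).1.1 else (Bw (-n - 1).toNat).1.1
    with hf
  have hf_nonneg : ∀ n : ℤ, 0 ≤ n → f n = (Fw n.toNat).1.1 := by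
    intro n hn; simp [hf, hn]
  have hf_neg : ∀ n : ℤ, n < 0 → f n = (Bw (-n - 1).toNat).1.1 := by
    intro n hn; simp [hf, not_le.mpr hn]
  set E : ℤ → Sym2 V := fun n => s(f n, f (n + 1)) with hE
  -- identify the edges of the sequence
  have hEF : ∀ m : ℕ, E m = (Fw (m + 1)).1.2 := by
    intro m
    have h1 : f m = (Fw m).1.1 := by
      rw [hf_nonneg m (by positivity)]; norm_num
    have h2 : f (m + 1) = (Fw (m + 1)).1.1 := by
      rw [hf_nonneg (m + 1) (by positivity)]
      norm_num
    rw [hE]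
    simp only [h1, h2]
    rw [hFwsucc m]
    exact hstep2 (Fw m)
  have hEm1 : E (-1) = s(a, b) := by
    have h1 : f (-1) = a := by rw [hf_neg (-1) (by norm_num)]; norm_num [hBw, hq0]
    have h2 : f 0 = b := by rw [hf_nonneg 0 le_rfl]; norm_num [hFw, hp0]
    rw [hE]; norm_num [h1, h2]
  have hEB : ∀ m : ℕ, E (-(m : ℤ) - 2) = (Bw (m + 1)).1.2 := by
    intro m
    have h1 : f (-(m : ℤ) - 2) = (Bw (m + 1)).1.1 := by
      rw [hf_neg _ (by omega), show (-(-(m : ℤ) - 2) - 1).toNat = m + 1 by omega]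
    have h2 : f (-(m : ℤ) - 1) = (Bw m).1.1 := by
      rw [hf_neg _ (by omega), show (-(-(m : ℤ) - 1) - 1).toNat = m by omega]
    have : (-(m : ℤ) - 2) + 1 = -(m : ℤ) - 1 := by ring
    rw [hE]
    simp only [this, h1, h2]
    rw [Sym2.eq_swap, hBwsucc m]
    exact hstep2 (Bw m)
  -- all edges lie in `X`
  have hEX : ∀ n : ℤ, E n ∈ X := by
    intro n
    rcases le_or_gt 0 n with hn | hn
    · obtain ⟨m, rfl⟩ := Int.eq_ofNat_of_zero_le hn
      rw [hEF m]; exact (Fw (m + 1)).2.1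
    · rcases eq_or_lt_of_le (Int.add_one_le_iff.mpr hn) with h1 | h1
      · rw [show n = -1 by omega, hEm1]; exact he₀
      · obtain ⟨m, hm⟩ : ∃ m : ℕ, n = -(m : ℤ) - 2 := ⟨(-n - 2).toNat, by omega⟩
        rw [hm, hEB m]; exact (Bw (m + 1)).2.1
  -- consecutive edges are distinct
  have hEne : ∀ n : ℤ, E n ≠ E (n + 1) := by
    intro n
    rcases le_or_gt 0 n with hn | hn
    · obtain ⟨m, rfl⟩ := Int.eq_ofNat_of_zero_le hn
      rw [hEF m, show ((m : ℤ) + 1) = ((m + 1 : ℕ) : ℤ) by push_cast; ring, hEF (m + 1),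
        hFwsucc (m + 1)]
      exact fun h => hstep1 (Fw (m + 1)) h.symm
    · rcases eq_or_lt_of_le (Int.add_one_le_iff.mpr hn) with h1 | h1
      · rw [show n = -1 by omega, hEm1, show (-1 : ℤ) + 1 = ((0 : ℕ) : ℤ) by norm_num, hEF 0,
          hFwsucc 0]
        have : (Fw 0).1.2 = s(a, b) := by norm_num [hFw, hp0]
        rw [← this]
        exact fun h => hstep1 (Fw 0) h.symm
      · rcases eq_or_lt_of_le (Int.add_one_le_iff.mpr h1) with h2 | h2
        · rw [show n = -2 by omega, show (-2 : ℤ) = -((0 : ℕ) : ℤ) - 2 by norm_num, hEB 0,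
            show -((0 : ℕ) : ℤ) - 2 + 1 = -1 by norm_num, hEm1, hBwsucc 0]
          have : (Bw 0).1.2 = s(a, b) := by norm_num [hBw, hq0]
          rw [← this]
          exact fun h => hstep1 (Bw 0) h
        · obtain ⟨m, hm⟩ : ∃ m : ℕ, n = -(m : ℤ) - 3 := ⟨(-n - 3).toNat, by omega⟩
          rw [hm, show -(m : ℤ) - 3 = -((m + 1 : ℕ) : ℤ) - 2 by push_cast; ring, hEB (m + 1),
            show -((m + 1 : ℕ) : ℤ) - 2 + 1 = -((m : ℕ) : ℤ) - 2 by push_cast; ring, hEB m,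
            hBwsucc (m + 1)]
          exact fun h => hstep1 (Bw (m + 1)) h
  -- vertices of consecutive edges are adjacent
  have hadj : ∀ n : ℤ, G.Adj (f n) (f (n + 1)) := by
    intro n
    have := hX (hEX n)
    rw [hE] at this
    exact this
  by_cases hinj : Function.Injective f
  · refine ⟨{e | ∃ i : ℤ, e = s(f i, f (i + 1))}, ?_, Or.inr ⟨f, hinj, hadj, rfl⟩⟩
    rintro e ⟨i, rfl⟩
    exact hEX i
  · -- there is a repetition; find a shortest one, giving a finite cycle
    have hrep : ∃ d : ℕ, 0 < d ∧ ∃ i : ℤ, f i = f (i + d) := by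
      simp only [Function.Injective] at hinj
      push_neg at hinj
      obtain ⟨i, j, hij, hne'⟩ := hinj
      rcases lt_or_gt_of_ne hne' with h | h
      · exact ⟨(j - i).toNat, by omega, i, by rw [show i + ((j - i).toNat : ℤ) = j by omega]; exact hij⟩
      · exact ⟨(i - j).toNat, by omega, j, by rw [show j + ((i - j).toNat : ℤ) = i by omega]; exact hij.symm⟩
    obtain ⟨hdpos, i, hicl⟩ := Nat.find_spec hrep
    have hmin : ∀ d' : ℕ, d' < Nat.find hrep → ¬(0 < d' ∧ ∃ i : ℤ, f i = f (i + d')) :=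
      fun d' h => Nat.find_min hrep h
    obtain ⟨d, hd⟩ : ∃ d, Nat.find hrep = d := ⟨_, rfl⟩
    rw [hd] at hdpos hicl hmin
    have hd3 : 3 ≤ d := by
      by_contra h
      push_neg at h
      have hd12 : d = 1 ∨ d = 2 := by omega
      rcases hd12 with rfl | rfl
      · -- d = 1 : a loop, impossible
        have := hadj i
        rw [show i + ((1 : ℕ) : ℤ) = i + 1 by norm_num] at hicl
        rw [← hicl] at this
        exact G.loopless.irrefl _ this
      · -- d = 2 : equal consecutive edges, impossible
        have h2 : f (i + 2) = f i := by
          rw [show i + ((2 : ℕ) : ℤ) = i + 2 by norm_num] at hicl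
          exact hicl.symm
        apply hEne i
        rw [hE]
        simp only
        rw [show i + 1 + 1 = i + 2 by ring, h2, Sym2.eq_swap]
    set g : ℕ → V := fun k => f (i + k) with hg
    have hgadj : ∀ k : ℕ, G.Adj (g k) (g (k + 1)) := by
      intro k
      have h := hadj (i + k)
      simp only [hg]
      rw [show ((k + 1 : ℕ) : ℤ) = (k : ℤ) + 1 by push_cast; ring, ← add_assoc]
      exact h
    have hginj : ∀ p q : ℕ, p < d → q < d → g p = g q → p = q := by
      intro p q hp hq hpq
      by_contra hnepq
      rcases Nat.lt_or_ge p q with h | h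
      · refine hmin (q - p) (by omega) ⟨by omega, i + p, ?_⟩
        rw [hg] at hpq
        rw [show i + (p : ℤ) + ((q - p : ℕ) : ℤ) = i + q by omega]
        exact hpq
      · have h' : q < p := by omega
        refine hmin (p - q) (by omega) ⟨by omega, i + q, ?_⟩
        rw [hg] at hpq
        rw [show i + (q : ℤ) + ((p - q : ℕ) : ℤ) = i + p by omega]
        exact hpq.symm
    have hgclose : g d = g 0 := by
      rw [hg]
      simp only [Nat.cast_zero, add_zero]
      exact hicl.symm
    refine ⟨_, ?_, Or.inl ⟨g 0, (walkFrom G g hgadj d).copy rfl hgclose,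
      isCycle_walkFrom G g hgadj d hd3 hginj hgclose, rfl⟩⟩
    intro e he
    simp only [Set.mem_setOf_eq, Walk.edges_copy, walkFrom_edges, List.mem_map,
      List.mem_range] at he
    obtain ⟨k, hk, rfl⟩ := he
    have : s(g k, g (k + 1)) = E (i + k) := by
      rw [hE, hg]
      congr 1
      push_cast
      ring
    rw [this]
    exact hEX _

/-- A set `F` of edges of `G` is thinly independent over `𝔽₂` (each edge represented by the
indicator function of its endvertices) if and only if `F` contains no elementary algebraic
cycle of `G`. -/
theorem thinIndep_iff_no_elemAlgCycle (G : SimpleGraph V) (F : Set (Sym2 V))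
    (hF : F ⊆ G.edgeSet) :
    ThinIndepEdges F ↔ ¬ ∃ C : Set (Sym2 V), C ⊆ F ∧ IsElemAlgCycle G C := by
  constructor
  · rintro hTI ⟨C, hCF, hC⟩
    rcases hC with ⟨v, w, hcyc, rfl⟩ | ⟨f, hinj, hadj, rfl⟩
    · -- a finite cycle is a dependent set
      have hfinC : {e : Sym2 V | e ∈ w.edges}.Finite := w.edges.toFinset.finite_toSet.subset
        (by intro e he; simpa using he)
      have hfin : ∀ u : V, {e ∈ {e : Sym2 V | e ∈ w.edges} | u ∈ e}.Finite := fun u =>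
        hfinC.subset fun e he => he.1
      have hzero : (fun u => ∑ᶠ e ∈ {e : Sym2 V | e ∈ w.edges}, edgeFun e u) = (0 : V → ZMod 2) := by
        funext u
        rw [finsum_edgeFun_eq (hfin u)]
        have hcount : Even (w.edges.countP fun e => u ∈ e) := by
          rw [hcyc.isTrail.even_countP_edges_iff u]
          exact fun h => absurd rfl h
        have hset : (hfin u).toFinset = (w.edges.filter (fun e => u ∈ e)).toFinset := by
          ext e
          simp only [Set.Finite.mem_toFinset, Set.mem_setOf_eq, List.mem_toFinset,
            List.mem_filter, decide_eq_true_eq]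
        have hcard : (hfin u).toFinset.card = w.edges.countP fun e => u ∈ e := by
          rw [hset, List.toFinset_card_of_nodup (hcyc.isTrail.edges_nodup.filter _),
            List.countP_eq_length_filter]
        rw [hcard]
        simp only [Pi.zero_apply]
        rw [ZMod.natCast_eq_zero_iff]
        exact hcount.two_dvd
      have := hTI _ hCF hfin hzero
      have hlen := hcyc.three_le_length
      have hnonempty : w.edges ≠ [] := by
        intro h
        rw [← w.length_edges, h] at hlen
        simp at hlen
      obtain ⟨e, he⟩ := List.exists_mem_of_ne_nil _ hnonempty
      have : e ∈ ({e : Sym2 V | e ∈ w.edges} : Set (Sym2 V)) := he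
      rw [‹{e : Sym2 V | e ∈ w.edges} = ∅›] at this
      exact this
    · -- a double ray is a dependent set
      set C : Set (Sym2 V) := {e | ∃ i : ℤ, e = s(f i, f (i + 1))} with hCdef
      have hkey : ∀ u : V, (∃ j : ℤ, f j = u) →
          ∀ (hj : ∃ j : ℤ, f j = u), {e ∈ C | u ∈ e} =
            {s(f (hj.choose - 1), f hj.choose), s(f hj.choose, f (hj.choose + 1))} := by
        intro u _ hj
        obtain hju := hj.choose_spec
        set j := hj.choose
        ext e
        simp only [Set.mem_setOf_eq, Set.mem_insert_iff, Set.mem_singleton_iff, hCdef]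
        constructor
        · rintro ⟨⟨i, rfl⟩, hu⟩
          rcases Sym2.mem_iff.mp hu with h | h
          · right
            have hji : j = i := hinj (hju.trans h)
            rw [hji]
          · left
            have hji : j = i + 1 := hinj (hju.trans h)
            have hi : i = j - 1 := by omega
            rw [hi, show j - 1 + 1 = j by ring]
        · rintro (rfl | rfl)
          · exact ⟨⟨j - 1, by rw [show j - 1 + 1 = j by ring]⟩, by rw [← hju]; simp⟩
          · exact ⟨⟨j, rfl⟩, by rw [← hju]; simp⟩
      have hfin : ∀ u : V, {e ∈ C | u ∈ e}.Finite := by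
        intro u
        by_cases hj : ∃ j : ℤ, f j = u
        · rw [hkey u hj hj]
          exact (Set.finite_singleton _).insert _
        · convert Set.finite_empty
          ext e
          simp only [Set.mem_setOf_eq, Set.mem_empty_iff_false, iff_false, not_and]
          rintro ⟨i, rfl⟩ hu
          rcases Sym2.mem_iff.mp hu with h | h
          · exact hj ⟨i, h.symm⟩
          · exact hj ⟨i + 1, h.symm⟩
      have hzero : (fun u => ∑ᶠ e ∈ C, edgeFun e u) = (0 : V → ZMod 2) := by
        funext u
        rw [finsum_edgeFun_eq (hfin u)]
        simp only [Pi.zero_apply]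
        rw [ZMod.natCast_eq_zero_iff]
        refine Even.two_dvd ?_
        by_cases hj : ∃ j : ℤ, f j = u
        · have hcardset := hkey u hj hj
          set j := hj.choose
          have hne2 : s(f (j - 1), f j) ≠ s(f j, f (j + 1)) := by
            intro h
            rcases Sym2.eq_iff.mp h with ⟨h1, _⟩ | ⟨h1, _⟩
            · have := hinj h1; omega
            · have := hinj h1; omega
          have : (hfin u).toFinset = {s(f (j - 1), f j), s(f j, f (j + 1))} := by
            ext e
            rw [Set.Finite.mem_toFinset, hcardset]
            simp
          rw [this, Finset.card_insert_of_notMem (by simpa using hne2), Finset.card_singleton]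
          exact ⟨1, rfl⟩
        · have : (hfin u).toFinset = ∅ := by
            ext e
            rw [Set.Finite.mem_toFinset]
            simp only [Set.mem_setOf_eq, Finset.notMem_empty, iff_false, not_and]
            rintro ⟨i, rfl⟩ hu
            rcases Sym2.mem_iff.mp hu with h | h
            · exact hj ⟨i, h.symm⟩
            · exact hj ⟨i + 1, h.symm⟩
          rw [this]
          simp
      have := hTI _ hCF hfin hzero
      have : s(f 0, f (0 + 1)) ∈ C := ⟨0, rfl⟩
      rw [‹C = ∅›] at this
      exact this
  · intro hno X hXF hfin hsum
    by_contra h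
    have hne : X.Nonempty := Set.nonempty_iff_ne_empty.mpr h
    have heven : ∀ v : V, Even (hfin v).toFinset.card := by
      intro v
      have := congrFun hsum v
      simp only [Pi.zero_apply] at this
      rw [finsum_edgeFun_eq (hfin v), ZMod.natCast_eq_zero_iff] at this
      exact (even_iff_two_dvd).mpr this
    obtain ⟨C, hCX, hCcyc⟩ := exists_cycle_of_even G X (fun e he => hF (hXF he)) hfin heven hne
    exact hno ⟨C, hCX.trans hXF, hCcyc⟩
end

section
/- Let G be a graph whose elementary algebraic cycles form the circuits of a matroid M on E(G). Then every non-empty cut of G one of whose sides induces a rayless subgraph contains a cocircuit of M. -/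
variable {V : Type*}

/-- A circuit of a (possibly infinite) matroid: a minimal dependent subset of the ground set. -/
def MatroidCircuit {α : Type*} (M : Matroid α) (C : Set α) : Prop :=
  C ⊆ M.E ∧ ¬ M.Indep C ∧ ∀ D : Set α, D ⊂ C → M.Indep D

/-- The subgraph of `G` induced on `A` is rayless: it contains no one-way infinite path. -/
def RaylessIn (G : SimpleGraph V) (A : Set V) : Prop :=
  ¬ ∃ f : ℕ → V, Function.Injective f ∧ (∀ n : ℕ, f n ∈ A) ∧
      ∀ n : ℕ, G.Adj (f n) (f (n + 1))

open Set

/-- Every dependent set contains a minimal dependent set (a circuit). -/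
lemma exists_matroidCircuit_subset {α : Type*} (M : Matroid α) {D : Set α}
    (hDE : D ⊆ M.E) (hdep : ¬ M.Indep D) : ∃ C, C ⊆ D ∧ MatroidCircuit M C := by
  obtain ⟨I, hI⟩ := M.exists_isBasis D hDE
  have hIind := hI.indep
  have hID : I ⊆ D := hI.subset
  obtain ⟨e, heD, heI⟩ : ∃ e, e ∈ D ∧ e ∉ I := by
    by_contra h
    push_neg at h
    exact hdep (hIind.subset h)
  have heE : e ∈ M.E := hDE heD
  set J : Set α := {x ∈ I | e ∉ M.closure (I \ {x})} with hJdef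
  have hJI : J ⊆ I := sep_subset _ _
  have heJ : e ∉ J := fun h => heI (hJI h)
  have heJcl : e ∈ M.closure J := by
    by_cases hne' : (I \ J).Nonempty
    · have hfam := hIind.closure_sInter_eq_biInter_closure_of_forall_subset
        (Js := (fun x => I \ {x}) '' (I \ J)) (hne'.image _)
        (by rintro K ⟨x, -, rfl⟩; exact diff_subset)
      have hint : ⋂₀ ((fun x => I \ {x}) '' (I \ J)) = J := by
        ext y
        simp only [sInter_image, mem_iInter, mem_diff, mem_singleton_iff]
        constructor
        · intro h
          obtain ⟨x0, hx0⟩ := hne'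
          have hyI : y ∈ I := (h x0 hx0).1
          refine ⟨hyI, fun hcl => ?_⟩
          exact (h y ⟨hyI, fun hy => (hy.2 hcl)⟩).2 rfl
        · intro hyJ x hx
          exact ⟨hJI hyJ, fun h => hx.2 (h ▸ hyJ)⟩
      rw [hint] at hfam
      rw [hfam, mem_iInter₂]
      rintro K ⟨x, hx, rfl⟩
      by_contra h
      exact hx.2 ⟨hx.1, h⟩
    · have hJeq : J = I := hJI.antisymm (by
        rw [Set.not_nonempty_iff_eq_empty, diff_eq_empty] at hne'
        exact hne')
      rw [hJeq]
      exact hI.subset_closure heD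
  refine ⟨insert e J, insert_subset heD (hJI.trans hID), ?_, ?_, ?_⟩
  · exact insert_subset heE ((hJI.trans hID).trans hDE)
  · intro hind
    exact (((hIind.subset hJI).notMem_closure_iff_of_notMem heJ heE).mpr hind) heJcl
  · intro D' hD'
    obtain ⟨x, hxC, hxD'⟩ := exists_of_ssubset hD'
    have hsub : D' ⊆ insert e J \ {x} := fun y hy => ⟨hD'.1 hy, fun h => hxD' (h ▸ hy)⟩
    rcases mem_insert_iff.mp hxC with rfl | hxJ
    · rw [insert_diff_self_of_notMem heJ] at hsub
      exact (hIind.subset hJI).subset hsub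
    · have hxe : e ≠ x := fun h => heJ (h ▸ hxJ)
      rw [insert_diff_of_notMem _ (by simpa using hxe)] at hsub
      have hJx : M.Indep (J \ {x}) := hIind.subset ((Set.diff_subset).trans hJI)
      have hnotcl : e ∉ M.closure (J \ {x}) := fun h =>
        hxJ.2 (M.closure_subset_closure (diff_subset_diff_left hJI) h)
      have : M.Indep (insert e (J \ {x})) :=
        (hJx.notMem_closure_iff_of_notMem (fun h => heJ h.1) heE).mp hnotcl
      exact this.subset hsub

lemma cut_mem_iff (G : SimpleGraph V) (A : Set V) {u v : V} (h : G.Adj u v) :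
    s(u, v) ∈ cutEdges G A ↔ ((u ∈ A ∧ v ∉ A) ∨ (v ∈ A ∧ u ∉ A)) := by
  constructor
  · rintro ⟨-, a, b, hab, ha, hb⟩
    rw [Sym2.eq_iff] at hab
    rcases hab with ⟨rfl, rfl⟩ | ⟨rfl, rfl⟩
    · exact Or.inl ⟨ha, hb⟩
    · exact Or.inr ⟨ha, hb⟩
  · rintro (⟨ha, hb⟩ | ⟨ha, hb⟩)
    · exact ⟨G.mem_edgeSet.mpr h, u, v, rfl, ha, hb⟩
    · exact ⟨G.mem_edgeSet.mpr h, v, u, Sym2.eq_swap.symm, ha, hb⟩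

open Classical in
lemma walk_cut_parity (G : SimpleGraph V) (A : Set V) {x y : V} (p : G.Walk x y) :
    Even (p.edges.countP (fun e => decide (e ∈ cutEdges G A))) ↔ (x ∈ A ↔ y ∈ A) := by
  induction p with
  | nil => simp
  | @cons u v w h q ih =>
    rw [SimpleGraph.Walk.edges_cons, List.countP_cons]
    by_cases hm : s(u, v) ∈ cutEdges G A
    · have hside := (cut_mem_iff G A h).mp hm
      rw [if_pos (decide_eq_true hm), Nat.even_add_one, ih]
      tauto
    · have hside : ¬ ((u ∈ A ∧ v ∉ A) ∨ (v ∈ A ∧ u ∉ A)) :=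
        fun hh => hm ((cut_mem_iff G A h).mpr hh)
      rw [if_neg (by simpa using hm), Nat.add_zero, ih]
      tauto
open Classical in
lemma key_no_single_cut_edge (G : SimpleGraph V) (A : Set V) (hray : RaylessIn G A)
    {C : Set (Sym2 V)} (hC : IsElemAlgCycle G C) {e : Sym2 V} (heC : e ∈ C)
    (heF : e ∈ cutEdges G A) (honly : ∀ x ∈ C, x ∈ cutEdges G A → x = e) : False := by
  rcases hC with ⟨v, w, hw, rfl⟩ | ⟨f, hinj, hadj, rfl⟩
  · -- finite cycle: parity contradiction
    have hnodup : w.edges.Nodup := hw.edges_nodup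
    have heW : e ∈ w.edges := heC
    have hpar := walk_cut_parity G A w
    have h1 : w.edges.countP (fun x => decide (x ∈ cutEdges G A)) = 1 := by
      refine le_antisymm ?_ ?_
      · have hle : w.edges.countP (fun x => decide (x ∈ cutEdges G A)) ≤
            w.edges.countP (· == e) := by
          apply List.countP_mono_left
          intro a ha hp
          simp only [decide_eq_true_eq] at hp
          simp [honly a ha hp]
        rw [← List.count_eq_countP] at hle
        exact hle.trans (List.nodup_iff_count_le_one.mp hnodup e)
      · have hpos : 0 < w.edges.countP (fun x => decide (x ∈ cutEdges G A)) :=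
          List.countP_pos_iff.mpr ⟨e, heW, by simpa using heF⟩
        omega
    rw [h1] at hpar
    simp at hpar
  · -- double ray
    obtain ⟨i₀, he⟩ := heC
    have hstep : ∀ j : ℤ, j ≠ i₀ → (f j ∈ A ↔ f (j + 1) ∈ A) := by
      intro j hj
      have hm : s(f j, f (j + 1)) ∉ cutEdges G A := by
        intro hmem
        have heq := honly _ ⟨j, rfl⟩ hmem
        rw [he, Sym2.eq_iff] at heq
        rcases heq with ⟨h1, h2⟩ | ⟨h1, h2⟩
        · exact hj (hinj h1)
        · have e1 := hinj h1; have e2 := hinj h2; omega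
      rw [cut_mem_iff G A (hadj j)] at hm
      tauto
    obtain ⟨-, u, v', huv, hu, hv⟩ := heF
    rw [he, Sym2.eq_iff] at huv
    rcases huv with ⟨h1, h2⟩ | ⟨h1, h2⟩
    · -- f i₀ = u ∈ A, f (i₀+1) = v' ∉ A : ray going down from i₀
      have hA0 : f i₀ ∈ A := by rw [h1]; exact hu
      refine hray ⟨fun n => f (i₀ - n), ?_, ?_, ?_⟩
      · intro m n hmn
        have := hinj hmn
        omega
      · intro n
        induction n with
        | zero => simpa using hA0
        | succ n ihn =>
          have hj := hstep (i₀ - n - 1) (by omega)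
          have e1 : (i₀ - (n : ℤ) - 1 + 1) = i₀ - n := by ring
          rw [e1] at hj
          have e2 : (i₀ - ((n + 1 : ℕ) : ℤ)) = i₀ - n - 1 := by push_cast; ring
          show f (i₀ - ((n + 1 : ℕ) : ℤ)) ∈ A
          rw [e2]
          exact hj.mpr ihn
      · intro n
        have h := (hadj (i₀ - n - 1)).symm
        have e1 : (i₀ - (n : ℤ) - 1 + 1) = i₀ - n := by ring
        rw [e1] at h
        have e2 : (i₀ - ((n + 1 : ℕ) : ℤ)) = i₀ - n - 1 := by push_cast; ring
        show G.Adj (f (i₀ - (n : ℤ))) (f (i₀ - ((n + 1 : ℕ) : ℤ)))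
        rw [e2]
        exact h
    · -- f i₀ = v' ∉ A, f (i₀+1) = u ∈ A : ray going up from i₀+1
      have hA0 : f (i₀ + 1) ∈ A := by rw [h2]; exact hu
      refine hray ⟨fun n => f (i₀ + 1 + n), ?_, ?_, ?_⟩
      · intro m n hmn
        have := hinj hmn
        omega
      · intro n
        induction n with
        | zero => simpa using hA0
        | succ n ihn =>
          have hj := hstep (i₀ + 1 + n) (by omega)
          have e2 : (i₀ + 1 + ((n + 1 : ℕ) : ℤ)) = i₀ + 1 + n + 1 := by push_cast; ring
          show f (i₀ + 1 + ((n + 1 : ℕ) : ℤ)) ∈ A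
          rw [e2]
          exact hj.mp ihn
      · intro n
        have h := hadj (i₀ + 1 + n)
        have e2 : (i₀ + 1 + ((n + 1 : ℕ) : ℤ)) = i₀ + 1 + n + 1 := by push_cast; ring
        show G.Adj (f (i₀ + 1 + (n : ℤ))) (f (i₀ + 1 + ((n + 1 : ℕ) : ℤ)))
        rw [e2]
        exact h

/-- If the elementary algebraic cycles of `G` are the circuits of a matroid `M`, then every
non-empty cut of `G` one of whose sides induces a rayless subgraph contains a cocircuit
of `M` (a circuit of the dual matroid `M✶`). -/
theorem rayless_side_cut_contains_cocircuit (G : SimpleGraph V) (M : Matroid (Sym2 V))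
    (hE : M.E = G.edgeSet)
    (hcirc : ∀ C : Set (Sym2 V), MatroidCircuit M C ↔ IsElemAlgCycle G C)
    (A : Set V) (hne : (cutEdges G A).Nonempty) (hray : RaylessIn G A) :
    ∃ D : Set (Sym2 V), D ⊆ cutEdges G A ∧ MatroidCircuit M✶ D := by
  classical
  set F := cutEdges G A with hF
  have hFE : F ⊆ M.E := by rw [hE]; exact fun e he => he.1
  have hnotsp : ¬ M.Spanning (M.E \ F) := by
    intro hsp
    obtain ⟨B, hB, hBss⟩ := hsp.exists_isBase_subset
    obtain ⟨e, heF⟩ := hne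
    have heE : e ∈ M.E := hFE heF
    have heB : e ∉ B := fun h => (hBss h).2 heF
    have hdep : ¬ M.Indep (insert e B) := by
      intro hind
      have h2 := hB.eq_of_subset_indep hind (Set.subset_insert e B)
      exact heB (h2 ▸ Set.mem_insert e B)
    obtain ⟨C, hCss, hCc⟩ := exists_matroidCircuit_subset M
      (Set.insert_subset heE hB.subset_ground) hdep
    have heC : e ∈ C := by
      by_contra h
      refine hCc.2.1 (hB.indep.subset fun x hx => ?_)
      rcases Set.mem_insert_iff.mp (hCss hx) with rfl | hxB
      · exact absurd hx h
      · exact hxB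
    have halg : IsElemAlgCycle G C := (hcirc C).mp hCc
    refine key_no_single_cut_edge G A hray halg heC heF ?_
    intro x hx hxF
    rcases Set.mem_insert_iff.mp (hCss hx) with rfl | hxB
    · rfl
    · exact absurd hxF (fun hh => (hBss hxB).2 hh)
  have hdualdep : ¬ M✶.Indep F := by
    intro h
    exact hnotsp (Matroid.Coindep.compl_spanning h)
  have hFE' : F ⊆ M✶.E := by rwa [Matroid.dual_ground]
  obtain ⟨D, hD1, hD2⟩ := exists_matroidCircuit_subset M✶ hFE' hdualdep
  exact ⟨D, hD1, hD2⟩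
end

section
/- Let G be a graph whose elementary algebraic cycles form the circuits of a matroid M on E(G). Then the cocircuits of M are exactly the skew cuts of G: the non-empty cuts E(A,B) with (say) G[A] rayless that are minimal among non-empty cuts with a rayless side. -/
variable {V : Type*}

/-- A skew cut of `G`: a non-empty cut one of whose sides induces a rayless subgraph,
minimal with this property among the non-empty cuts. -/
def IsSkewCut (G : SimpleGraph V) (D : Set (Sym2 V)) : Prop :=
  Minimal (fun D' : Set (Sym2 V) =>
    D'.Nonempty ∧ ∃ A : Set V, D' = cutEdges G A ∧ RaylessIn G A) D

namespace SkewAux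

open Set


variable {α : Type*}

/-- Fundamental circuit existence. -/
lemma fund_circuit (M : Matroid α) {I : Set α} {e : α} (hI : M.Indep I) (he : e ∈ M.E)
    (heI : e ∉ I) (hdep : ¬ M.Indep (insert e I)) :
    ∃ C, MatroidCircuit M C ∧ e ∈ C ∧ C ⊆ insert e I := by
  have hdep' : M.Dep (insert e I) :=
    ⟨hdep, insert_subset he hI.subset_ground⟩
  have hecl : e ∈ M.closure I := ((hI.insert_dep_iff).mp hdep').1
  set Js : Set (Set α) := {J | J ⊆ I ∧ e ∈ M.closure J} with hJs
  have hIJs : I ∈ Js := ⟨subset_rfl, hecl⟩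
  have hne : Js.Nonempty := ⟨I, hIJs⟩
  set J0 := ⋂₀ Js with hJ0
  have hJ0I : J0 ⊆ I := sInter_subset_of_mem hIJs
  have hclInter := hI.closure_sInter_eq_biInter_closure_of_forall_subset hne (fun J hJ => hJ.1)
  have heJ0 : e ∈ M.closure J0 := by
    rw [hJ0, hclInter]
    exact mem_iInter₂.mpr fun J hJ => hJ.2
  have heJ0' : e ∉ J0 := fun h => heI (hJ0I h)
  have hJ0indep : M.Indep J0 := hI.subset hJ0I
  refine ⟨insert e J0, ⟨?_, ?_, ?_⟩, mem_insert _ _, insert_subset_insert hJ0I⟩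
  · exact insert_subset he ((hJ0I.trans hI.subset_ground))
  · exact (hJ0indep.insert_dep_iff.mpr ⟨heJ0, heJ0'⟩).not_indep
  · intro D hD
    by_cases heD : e ∈ D
    · by_contra hdepD
      have hDsub : D ⊆ insert e J0 := hD.subset
      have hD' : D \ {e} ⊆ J0 := by
        intro x hx
        rcases hDsub hx.1 with h | h
        · exact absurd h hx.2
        · exact h
      have hJ'indep : M.Indep (D \ {e}) := hJ0indep.subset hD'
      have hDeq : D = insert e (D \ {e}) := by
        rw [insert_diff_singleton, insert_eq_self.mpr heD]
      have hDdep : M.Dep D :=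
        ⟨hdepD, hD.subset.trans (insert_subset he (hJ0I.trans hI.subset_ground))⟩
      have : e ∈ M.closure (D \ {e}) := by
        have := hJ'indep.insert_dep_iff.mp (hDeq ▸ hDdep)
        exact this.1
      have hmem : (D \ {e}) ∈ Js := ⟨hD'.trans hJ0I, this⟩
      have : J0 ⊆ D \ {e} := sInter_subset_of_mem hmem
      have : insert e J0 ⊆ D := by
        rw [hDeq]
        exact insert_subset_insert this
      exact hD.2 this
    · have : D ⊆ J0 := fun x hx => by
        rcases hD.subset hx with h | h
        · exact absurd (h ▸ hx) heD
        · exact h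
      exact hJ0indep.subset this

/-- Every dependent set contains a circuit. -/
lemma dep_circuit (N : Matroid α) {X : Set α} (hX : X ⊆ N.E) (hdep : ¬ N.Indep X) :
    ∃ C, MatroidCircuit N C ∧ C ⊆ X := by
  obtain ⟨I, hI⟩ := N.exists_isBasis X hX
  have hne : ∃ e, e ∈ X \ I := by
    by_contra h
    push_neg at h
    have : X ⊆ I := fun x hx => by
      by_contra hxI; exact h x ⟨hx, hxI⟩
    exact hdep (hI.indep.subset this)
  obtain ⟨e, he⟩ := hne
  have hdep' : N.Dep (insert e I) := hI.insert_dep he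
  obtain ⟨C, hC, -, hCsub⟩ :=
    fund_circuit N hI.indep (hX he.1) he.2 hdep'.not_indep
  exact ⟨C, hC, hCsub.trans (insert_subset he.1 hI.subset)⟩

/-- The key auxiliary predicate: a nonempty edge set meeting every elementary algebraic
cycle in more than one edge (or not at all). -/
def MeetsProp (G : SimpleGraph V) (D : Set (Sym2 V)) : Prop :=
  D ⊆ G.edgeSet ∧ D.Nonempty ∧ ∀ C : Set (Sym2 V), IsElemAlgCycle G C → ∀ e, C ∩ D ≠ {e}

section MatroidSide

variable {G : SimpleGraph V} {M : Matroid (Sym2 V)}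
  (hE : M.E = G.edgeSet)
  (hcirc : ∀ C : Set (Sym2 V), MatroidCircuit M C ↔ IsElemAlgCycle G C)

include hE hcirc

lemma cocirc_meets {D : Set (Sym2 V)} (hD : MatroidCircuit M✶ D) : MeetsProp G D := by
  obtain ⟨hDE, hDdep, hDmin⟩ := hD
  rw [Matroid.dual_ground, hE] at hDE
  refine ⟨hDE, ?_, ?_⟩
  · rw [Set.nonempty_iff_ne_empty]
    rintro rfl
    exact hDdep M✶.empty_indep
  · intro C hC e hCD
    have hCcirc : MatroidCircuit M C := (hcirc C).mpr hC
    obtain ⟨hCE, hCdep, hCmin⟩ := hCcirc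
    have heC : e ∈ C := by
      have : e ∈ C ∩ D := hCD ▸ rfl
      exact this.1
    have heD : e ∈ D := by
      have : e ∈ C ∩ D := hCD ▸ rfl
      exact this.2
    have hCe_indep : M.Indep (C \ {e}) :=
      hCmin _ (Set.sdiff_singleton_ssubset.mpr heC)
    have hDe_coindep : M✶.Indep (D \ {e}) :=
      hDmin _ (Set.sdiff_singleton_ssubset.mpr heD)
    rw [Matroid.dual_indep_iff_exists'] at hDe_coindep
    obtain ⟨-, B, hB, hdisj⟩ := hDe_coindep
    have hsp : M.Spanning (M.E \ (D \ {e})) :=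
      hB.spanning_of_superset (subset_diff.mpr ⟨hB.subset_ground, hdisj.symm⟩) diff_subset
    have hCsub : C \ {e} ⊆ M.E \ (D \ {e}) := by
      rintro x ⟨hxC, hxe⟩
      refine ⟨hCE hxC, ?_⟩
      rintro ⟨hxD, -⟩
      have hxmem : x ∈ C ∩ D := ⟨hxC, hxD⟩
      rw [hCD] at hxmem
      exact hxe hxmem
    obtain ⟨B', hB'basis, hCB'⟩ := hCe_indep.subset_isBasis_of_subset hCsub diff_subset
    have hB'base : M.IsBase B' :=
      hB'basis.indep.isBase_of_spanning ⟨hB'basis.closure_eq_closure.trans hsp.closure_eq,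
        hB'basis.indep.subset_ground⟩
    by_cases heB' : e ∈ B'
    · have hCB : C ⊆ B' := by
        intro x hx
        by_cases hxe : x = e
        · exact hxe ▸ heB'
        · exact hCB' ⟨hx, hxe⟩
      exact hCdep (hB'base.indep.subset hCB)
    · have hBD : Disjoint D B' := by
        rw [Set.disjoint_right]
        intro x hxB' hxD
        have := hB'basis.subset hxB'
        exact this.2 ⟨hxD, fun h => heB' (h ▸ hxB')⟩
      exact hDdep (Matroid.dual_indep_iff_exists'.mpr ⟨by rw [hE]; exact hDE,
        B', hB'base, hBD⟩)

lemma meets_codep {D : Set (Sym2 V)} (hD : MeetsProp G D) : ¬ M✶.Indep D := by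
  intro h
  rw [Matroid.dual_indep_iff_exists'] at h
  obtain ⟨hDE', B, hB, hdisj⟩ := h
  obtain ⟨e, heD⟩ := hD.2.1
  have heE : e ∈ M.E := by rw [hE]; exact hD.1 heD
  have heB : e ∉ B := fun h => (Set.disjoint_left.mp hdisj heD) h
  obtain ⟨C, hC, heC, hCsub⟩ :=
    fund_circuit M hB.indep heE heB (hB.insert_dep ⟨heE, heB⟩).not_indep
  refine hD.2.2 C ((hcirc C).mp hC) e ?_
  apply Set.eq_singleton_iff_unique_mem.mpr
  refine ⟨⟨heC, heD⟩, ?_⟩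
  rintro x ⟨hxC, hxD⟩
  rcases hCsub hxC with h | h
  · exact h
  · exact absurd h (Set.disjoint_left.mp hdisj hxD)

lemma matroid_side {D : Set (Sym2 V)} :
    MatroidCircuit M✶ D ↔ Minimal (MeetsProp G) D := by
  constructor
  · intro hD
    refine ⟨cocirc_meets hE hcirc hD, ?_⟩
    intro y hy hyD
    by_contra hDy
    exact meets_codep hE hcirc hy (hD.2.2 y ⟨hyD, fun h => hDy h⟩)
  · rintro ⟨hP, hmin⟩
    refine ⟨?_, meets_codep hE hcirc hP, ?_⟩
    · rw [Matroid.dual_ground, hE]; exact hP.1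
    · intro D' hD'
      by_contra hdep'
      have hD'E : D' ⊆ M✶.E := by
        rw [Matroid.dual_ground, hE]; exact hD'.subset.trans hP.1
      obtain ⟨C, hC, hCD'⟩ := dep_circuit M✶ hD'E hdep'
      have hCD : D ⊆ C := hmin (cocirc_meets hE hcirc hC) (hCD'.trans hD'.subset)
      exact hD'.2 (hCD.trans hCD')

end MatroidSide

/-- A ray in `H` starting at `u`. -/
def RayFrom (H : SimpleGraph V) (u : V) : Prop :=
  ∃ f : ℕ → V, Function.Injective f ∧ f 0 = u ∧ ∀ n, H.Adj (f n) (f (n + 1))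

section Graph

variable {G : SimpleGraph V} {D : Set (Sym2 V)}

/-- If two endpoints of an edge of `D` are joined by a walk avoiding `D`, we get a finite
cycle meeting `D` in exactly one edge, contradicting `MeetsProp`. -/
lemma lemX (hP : MeetsProp G D) {a b : V} (hab : s(a, b) ∈ D)
    (hr : (G.deleteEdges D).Reachable a b) : False := by
  classical
  obtain ⟨hDE, -, hmeets⟩ := hP
  have habE : s(a, b) ∈ G.edgeSet := hDE hab
  have hadj : G.Adj a b := habE
  obtain ⟨p₀⟩ := hr.symm
  set p : (G.deleteEdges D).Walk b a := p₀.toPath.1 with hpdef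
  have hpPath : p.IsPath := p₀.toPath.2
  have hpedges : ∀ e ∈ p.edges, e ∈ (G.deleteEdges D).edgeSet := fun e he =>
    p.edges_subset_edgeSet he
  have hGedges : ∀ e ∈ p.edges, e ∈ G.edgeSet := fun e he => by
    have := hpedges e he
    rw [SimpleGraph.edgeSet_deleteEdges] at this
    exact this.1
  set q : G.Walk b a := p.transfer G hGedges with hqdef
  have hq_edges : q.edges = p.edges := p.edges_transfer hGedges
  have hqpath : q.IsPath := hpPath.transfer hGedges
  have hnotin : ¬ s(a, b) ∈ q.edges := by
    rw [hq_edges]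
    intro h
    have := hpedges _ h
    rw [SimpleGraph.edgeSet_deleteEdges] at this
    exact this.2 hab
  have hcyc : (SimpleGraph.Walk.cons hadj q).IsCycle :=
    (SimpleGraph.Walk.cons_isCycle_iff q hadj).mpr ⟨hqpath, hnotin⟩
  apply hmeets {e | e ∈ (SimpleGraph.Walk.cons hadj q).edges}
    (Or.inl ⟨a, SimpleGraph.Walk.cons hadj q, hcyc, rfl⟩) s(a, b)
  ext x
  simp only [Set.mem_inter_iff, Set.mem_setOf_eq, SimpleGraph.Walk.edges_cons,
    List.mem_cons, Set.mem_singleton_iff]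
  constructor
  · rintro ⟨h1 | h1, h2⟩
    · exact h1
    · exfalso
      have := hpedges _ (hq_edges ▸ h1)
      rw [SimpleGraph.edgeSet_deleteEdges] at this
      exact this.2 h2
  · rintro rfl
    exact ⟨Or.inl rfl, hab⟩

lemma ray_of_adj {H : SimpleGraph V} {u x : V} (h : H.Adj u x) (hf : RayFrom H x) :
    RayFrom H u := by
  obtain ⟨f, hinj, hf0, hadj⟩ := hf
  by_cases hu : ∃ k, f k = u
  · obtain ⟨k, hk⟩ := hu
    refine ⟨fun n => f (k + n), fun m n hmn => by
      have := hinj hmn; omega, by simpa using hk, fun n => ?_⟩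
    show H.Adj (f (k + n)) (f (k + (n + 1)))
    have : k + (n + 1) = (k + n) + 1 := by omega
    rw [this]
    exact hadj (k + n)
  · push_neg at hu
    refine ⟨fun n => Nat.casesOn n u f, ?_, rfl, ?_⟩
    · intro m n hmn
      match m, n with
      | 0, 0 => rfl
      | 0, n + 1 => exact absurd hmn.symm (fun h => hu n h)
      | m + 1, 0 => exact absurd hmn (fun h => hu m h)
      | m + 1, n + 1 => simpa using hinj hmn
    · intro n
      match n with
      | 0 => simpa [hf0] using h
      | n + 1 => exact hadj n

lemma ray_of_walk {H : SimpleGraph V} {u x : V} (w : H.Walk u x) (hf : RayFrom H x) :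
    RayFrom H u := by
  induction w with
  | nil => exact hf
  | cons h p ih => exact ray_of_adj h (ih hf)

lemma ray_reachable {H : SimpleGraph V} {f : ℕ → V} (hadj : ∀ n, H.Adj (f n) (f (n + 1))) :
    ∀ n, H.Reachable (f 0) (f n) := by
  intro n
  induction n with
  | zero => exact SimpleGraph.Reachable.refl _
  | succ n ih => exact ih.trans (hadj n).reachable

lemma double_ray (hP : MeetsProp G D) {u0 v0 : V} (he0 : s(u0, v0) ∈ D)
    (hf : RayFrom (G.deleteEdges D) u0) (hg : RayFrom (G.deleteEdges D) v0) : False := by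
  set H := G.deleteEdges D with hH
  obtain ⟨f, hfinj, hf0, hfadj⟩ := hf
  obtain ⟨g, hginj, hg0, hgadj⟩ := hg
  have hdisj : ∀ m n, f m ≠ g n := by
    intro m n hEq
    apply lemX hP he0
    have h1 : H.Reachable u0 (f m) := hf0 ▸ ray_reachable hfadj m
    have h2 : H.Reachable v0 (g n) := hg0 ▸ ray_reachable hgadj n
    exact h1.trans (hEq ▸ h2.symm)
  -- the double ray
  set h : ℤ → V := fun i => Int.casesOn i f g with hh
  have hhinj : Function.Injective h := by
    intro a b hab
    match a, b with
    | Int.ofNat m, Int.ofNat n => simpa using hfinj hab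
    | Int.ofNat m, Int.negSucc n => exact absurd hab (hdisj m n)
    | Int.negSucc m, Int.ofNat n => exact absurd hab.symm (hdisj n m)
    | Int.negSucc m, Int.negSucc n => simpa using hginj hab
  have hGadj : ∀ u v, H.Adj u v → G.Adj u v := fun u v huv =>
    (SimpleGraph.deleteEdges_adj.mp huv).1
  have hnotD : ∀ u v, H.Adj u v → s(u, v) ∉ D := fun u v huv =>
    (SimpleGraph.deleteEdges_adj.mp huv).2
  have hu0v0 : G.Adj u0 v0 := hP.1 he0
  have hhadj : ∀ i : ℤ, G.Adj (h i) (h (i + 1)) := by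
    intro i
    match i with
    | Int.ofNat n =>
      have : ((Int.ofNat n) + 1) = Int.ofNat (n + 1) := rfl
      rw [this]
      exact hGadj _ _ (hfadj n)
    | Int.negSucc 0 =>
      have : ((Int.negSucc 0) + 1) = Int.ofNat 0 := rfl
      rw [this]
      show G.Adj (g 0) (f 0)
      rw [hg0, hf0]
      exact hu0v0.symm
    | Int.negSucc (n + 1) =>
      have : ((Int.negSucc (n + 1)) + 1) = Int.negSucc n := rfl
      rw [this]
      exact (hGadj _ _ (hgadj n)).symm
  apply hP.2.2 {e | ∃ i : ℤ, e = s(h i, h (i + 1))}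
    (Or.inr ⟨h, hhinj, hhadj, rfl⟩) s(u0, v0)
  ext x
  simp only [Set.mem_inter_iff, Set.mem_setOf_eq, Set.mem_singleton_iff]
  constructor
  · rintro ⟨⟨i, rfl⟩, hxD⟩
    match i with
    | Int.ofNat n => exact absurd hxD (hnotD _ _ (hfadj n))
    | Int.negSucc 0 =>
      show s(h (Int.negSucc 0), h ((Int.negSucc 0) + 1)) = s(u0, v0)
      have h1 : h (Int.negSucc 0) = v0 := hg0
      have h2 : h ((Int.negSucc 0) + 1) = u0 := hf0
      rw [h1, h2, Sym2.eq_swap]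
    | Int.negSucc (n + 1) =>
      exfalso
      have : ((Int.negSucc (n + 1)) + 1) = Int.negSucc n := rfl
      rw [this] at hxD
      exact (hnotD _ _ (hgadj n)) (Sym2.eq_swap ▸ hxD)
  · rintro rfl
    refine ⟨⟨Int.negSucc 0, ?_⟩, he0⟩
    show s(u0, v0) = s(h (Int.negSucc 0), h ((Int.negSucc 0) + 1))
    have h1 : h (Int.negSucc 0) = v0 := hg0
    have h2 : h ((Int.negSucc 0) + 1) = u0 := hf0
    rw [h1, h2, Sym2.eq_swap]

lemma no_ray_case (hP : MeetsProp G D) {u0 v0 : V} (he0 : s(u0, v0) ∈ D)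
    (hnoray : ¬ RayFrom (G.deleteEdges D) u0) :
    ∃ A : Set V, cutEdges G A ⊆ D ∧ (cutEdges G A).Nonempty ∧ RaylessIn G A := by
  set H := G.deleteEdges D with hH
  set A : Set V := {x | H.Reachable u0 x} with hA
  have hu0A : u0 ∈ A := SimpleGraph.Reachable.refl _
  have hv0A : v0 ∉ A := fun h => lemX hP he0 h
  have hcutD : cutEdges G A ⊆ D := by
    rintro e ⟨heE, a, b, rfl, ha, hb⟩
    by_contra heD
    have : H.Adj a b := SimpleGraph.deleteEdges_adj.mpr ⟨heE, heD⟩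
    exact hb (ha.trans this.reachable)
  refine ⟨A, hcutD, ⟨s(u0, v0), hP.1 he0, u0, v0, rfl, hu0A, hv0A⟩, ?_⟩
  rintro ⟨f, hinj, hfA, hfadj⟩
  have hHadj : ∀ n, H.Adj (f n) (f (n + 1)) := by
    intro n
    refine SimpleGraph.deleteEdges_adj.mpr ⟨hfadj n, fun hD => ?_⟩
    exact lemX hP hD ((hfA n).symm.trans (hfA (n + 1)))
  obtain ⟨w⟩ := (hfA 0 : H.Reachable u0 (f 0))
  exact hnoray (ray_of_walk w ⟨f, hinj, rfl, hHadj⟩)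

/-- Every `MeetsProp` set contains a nonempty cut with a rayless side. -/
lemma lemC (hP : MeetsProp G D) :
    ∃ A : Set V, cutEdges G A ⊆ D ∧ (cutEdges G A).Nonempty ∧ RaylessIn G A := by
  obtain ⟨e0, he0⟩ := hP.2.1
  induction e0 using Sym2.ind with
  | _ u0 v0 =>
    by_cases h1 : RayFrom (G.deleteEdges D) u0
    · by_cases h2 : RayFrom (G.deleteEdges D) v0
      · exact absurd (double_ray hP he0 h1 h2) (fun h => h)
      · exact no_ray_case hP (Sym2.eq_swap ▸ he0) h2
    · exact no_ray_case hP he0 h1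

lemma countP_eq_one {β : Type*} {l : List β} {p : β → Bool} {e : β} (hnodup : l.Nodup)
    (he : e ∈ l) (h : ∀ x ∈ l, (p x = true ↔ x = e)) : l.countP p = 1 := by
  induction l with
  | nil => simp at he
  | cons a l ih =>
    rw [List.countP_cons]
    rcases List.mem_cons.mp he with heq | hel
    · have hpa : p a = true := (h a List.mem_cons_self).mpr heq.symm
      have hzero : l.countP p = 0 := by
        apply List.countP_eq_zero.mpr
        intro x hx
        intro hpx
        have hxe := (h x (List.mem_cons_of_mem a hx)).mp hpx
        rw [hxe, heq] at hx
        exact (List.nodup_cons.mp hnodup).1 hx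
      simp [hzero, hpa]
    · have hane : a ≠ e := by
        rintro rfl
        exact (List.nodup_cons.mp hnodup).1 hel
      have hpa : p a = false := by
        by_contra hpa
        exact hane ((h a List.mem_cons_self).mp (by simpa using hpa))
      have := ih (List.nodup_cons.mp hnodup).2 hel
        (fun x hx => h x (List.mem_cons_of_mem a hx))
      simp [hpa, this]

noncomputable def pb (G : SimpleGraph V) (A : Set V) : Sym2 V → Bool :=
  fun e => @decide (e ∈ cutEdges G A) (Classical.propDecidable _)

lemma pb_iff {A : Set V} {e : Sym2 V} : pb G A e = true ↔ e ∈ cutEdges G A := by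
  simp [pb]

lemma mem_cut_iff {A : Set V} {x b : V} (hadj : G.Adj x b) :
    s(x, b) ∈ cutEdges G A ↔ ((x ∈ A ∧ b ∉ A) ∨ (b ∈ A ∧ x ∉ A)) := by
  constructor
  · rintro ⟨-, u, v, hEq, hu, hv⟩
    rcases Sym2.eq_iff.mp hEq with ⟨rfl, rfl⟩ | ⟨rfl, rfl⟩
    · exact Or.inl ⟨hu, hv⟩
    · exact Or.inr ⟨hu, hv⟩
  · rintro (⟨hx, hb⟩ | ⟨hb, hx⟩)
    · exact ⟨hadj, x, b, rfl, hx, hb⟩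
    · exact ⟨hadj, b, x, Sym2.eq_swap, hb, hx⟩

lemma cross_count {A : Set V} : ∀ {x y : V} (w : G.Walk x y),
    (Even (w.edges.countP (pb G A)) ↔ (x ∈ A ↔ y ∈ A)) := by
  intro x y w
  induction w with
  | nil => simp
  | @cons x b y h p ih =>
    rw [SimpleGraph.Walk.edges_cons, List.countP_cons]
    by_cases hcut : s(x, b) ∈ cutEdges G A
    · have hb : pb G A s(x, b) = true := pb_iff.mpr hcut
      rw [(mem_cut_iff h)] at hcut
      simp only [hb, if_pos]
      rcases hcut with ⟨hx, hbn⟩ | ⟨hbm, hxn⟩ <;>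
        · simp only [Nat.even_add_one, ih] <;> constructor <;> intro hh <;> tauto
    · have hb : pb G A s(x, b) = false := by
        by_contra hh
        exact hcut (pb_iff.mp (by simpa using hh))
      rw [(mem_cut_iff h)] at hcut
      push_neg at hcut
      have hzero : (if pb G A s(x, b) = true then 1 else 0) = 0 := by simp [hb]
      rw [hzero, Nat.add_zero, ih]
      constructor <;> intro hh <;> constructor <;> intro h2 <;> by_contra h3 <;> tauto

lemma dr_edge_inj {f : ℤ → V} (hfinj : Function.Injective f) {i j : ℤ}
    (h : s(f i, f (i + 1)) = s(f j, f (j + 1))) : i = j := by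
  rcases Sym2.eq_iff.mp h with ⟨h1, h2⟩ | ⟨h1, h2⟩
  · exact hfinj h1
  · have e1 : i = j + 1 := hfinj h1
    have e2 : i + 1 = j := hfinj h2
    omega

lemma lemB (hQ : D.Nonempty ∧ ∃ A : Set V, D = cutEdges G A ∧ RaylessIn G A) :
    MeetsProp G D := by
  obtain ⟨hne, A, rfl, hrl⟩ := hQ
  refine ⟨fun e he => he.1, hne, ?_⟩
  rintro C (⟨v, w, hcyc, rfl⟩ | ⟨f, hfinj, hfadj, rfl⟩) e hCD
  · -- finite cycle: parity contradiction
    have heC : e ∈ w.edges := by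
      have : e ∈ {e | e ∈ w.edges} ∩ cutEdges G A := hCD ▸ rfl
      exact this.1
    have heD : e ∈ cutEdges G A := by
      have : e ∈ {e | e ∈ w.edges} ∩ cutEdges G A := hCD ▸ rfl
      exact this.2
    have heven : Even (w.edges.countP (pb G A)) := (cross_count w).mpr Iff.rfl
    have hone : w.edges.countP (pb G A) = 1 := by
      apply countP_eq_one hcyc.edges_nodup heC
      intro x hx
      rw [pb_iff]
      constructor
      · intro hxcut
        have : x ∈ {e | e ∈ w.edges} ∩ cutEdges G A := ⟨hx, hxcut⟩
        rw [hCD] at this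
        exact this
      · rintro rfl
        exact heD
    rw [hone] at heven
    simp at heven
  · -- double ray: the ray on the A-side contradicts raylessness
    have heC : ∃ i : ℤ, e = s(f i, f (i + 1)) := by
      have : e ∈ {e | ∃ i : ℤ, e = s(f i, f (i + 1))} ∩ cutEdges G A := hCD ▸ rfl
      exact this.1
    have heD : e ∈ cutEdges G A := by
      have : e ∈ {e | ∃ i : ℤ, e = s(f i, f (i + 1))} ∩ cutEdges G A := hCD ▸ rfl
      exact this.2
    obtain ⟨i0, rfl⟩ := heC
    have hnocross : ∀ i : ℤ, i ≠ i0 → (f i ∈ A ↔ f (i + 1) ∈ A) := by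
      intro i hi
      by_contra hcr
      have hcut : s(f i, f (i + 1)) ∈ cutEdges G A := by
        rw [mem_cut_iff (hfadj i)]
        tauto
      have : s(f i, f (i + 1)) ∈ {e | ∃ i : ℤ, e = s(f i, f (i + 1))} ∩ cutEdges G A :=
        ⟨⟨i, rfl⟩, hcut⟩
      rw [hCD] at this
      exact hi (dr_edge_inj hfinj this)
    rw [mem_cut_iff (hfadj i0)] at heD
    rcases heD with ⟨hin, hout⟩ | ⟨hin, hout⟩
    · -- f i0 ∈ A : ray going down
      have hdown : ∀ n : ℕ, f (i0 - n) ∈ A := by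
        intro n
        induction n with
        | zero => simpa using hin
        | succ n ih =>
          have hne : i0 - (n + 1 : ℕ) ≠ i0 := by push_cast; omega
          have hstep := hnocross _ hne
          have harith : (i0 - (n + 1 : ℕ)) + 1 = i0 - n := by push_cast; ring
          rw [harith] at hstep
          exact hstep.mpr ih
      refine absurd ?_ hrl
      refine ⟨fun n => f (i0 - n), ?_, hdown, ?_⟩
      · intro m n hmn
        have := hfinj hmn
        omega
      · intro n
        have harith : (i0 - (n + 1 : ℕ)) + 1 = i0 - n := by push_cast; ring
        have := hfadj (i0 - (n + 1 : ℕ))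
        rw [harith] at this
        exact this.symm
    · -- f (i0+1) ∈ A : ray going up
      have hup : ∀ n : ℕ, f (i0 + 1 + n) ∈ A := by
        intro n
        induction n with
        | zero => simpa using hin
        | succ n ih =>
          have hne : i0 + 1 + (n : ℕ) ≠ i0 := by omega
          have hstep := hnocross _ hne
          have harith : (i0 + 1 + (n : ℕ)) + 1 = i0 + 1 + ((n + 1 : ℕ) : ℤ) := by
            push_cast; ring
          rw [harith] at hstep
          exact hstep.mp ih
      refine absurd ?_ hrl
      refine ⟨fun n => f (i0 + 1 + n), ?_, hup, ?_⟩
      · intro m n hmn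
        have := hfinj hmn
        omega
      · intro n
        have harith : (i0 + 1 + (n : ℕ)) + 1 = i0 + 1 + ((n + 1 : ℕ) : ℤ) := by
          push_cast; ring
        have := hfadj (i0 + 1 + (n : ℕ))
        rw [harith] at this
        exact this

end Graph

end SkewAux

/-- If the elementary algebraic cycles of `G` are the circuits of a matroid `M`, then the
cocircuits of `M` are exactly the skew cuts of `G`. -/
theorem cocircuits_eq_skew_cuts (G : SimpleGraph V) (M : Matroid (Sym2 V))
    (hE : M.E = G.edgeSet)
    (hcirc : ∀ C : Set (Sym2 V), MatroidCircuit M C ↔ IsElemAlgCycle G C) :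
    ∀ D : Set (Sym2 V), MatroidCircuit M✶ D ↔ IsSkewCut G D := by
  intro D
  rw [SkewAux.matroid_side hE hcirc]
  unfold IsSkewCut
  constructor
  · rintro ⟨hP, hmin⟩
    obtain ⟨A, hsub, hne, hrl⟩ := SkewAux.lemC hP
    have hP0 := SkewAux.lemB ⟨hne, A, rfl, hrl⟩
    have hEq : D = cutEdges G A := (hmin hP0 hsub).antisymm hsub
    refine ⟨⟨by rw [hEq]; exact hne, A, hEq, hrl⟩, ?_⟩
    intro y hy hyD
    exact hmin (SkewAux.lemB hy) hyD
  · rintro ⟨hQ, hmin⟩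
    refine ⟨SkewAux.lemB hQ, ?_⟩
    intro y hy hyD
    obtain ⟨A, hsub, hne, hrl⟩ := SkewAux.lemC hy
    have hDA : D ⊆ cutEdges G A := hmin ⟨hne, A, rfl, hrl⟩ (hsub.trans hyD)
    exact hDA.trans hsub
end

section
/- Let E be a set and 𝓒 ⊆ 2^E a collection satisfying the circuit axioms (C1)–(C3) and (CM) of infinite matroids. If B is a maximal subset of E containing no member of 𝓒, and e ∈ E \ B, then B + e contains at most one member of 𝓒. -/
open Set

variable {α : Type*}

/-- A set is `𝓒`-independent if it contains no member of `𝓒`. -/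
def CIndep (𝓒 : Set (Set α)) (I : Set α) : Prop :=
  ¬ ∃ C ∈ 𝓒, C ⊆ I

/-- If `𝓒` satisfies the circuit axioms (C1), (C2), (C3) and (CM) of infinite matroids,
`B` is a maximal set containing no member of `𝓒`, and `e ∉ B`, then `B + e` contains
at most one member of `𝓒`. -/
theorem at_most_one_circuit_in_base_plus_edge (𝓒 : Set (Set α))
    (hC1 : ∅ ∉ 𝓒)
    (hC2 : ∀ C C' : Set α, C ∈ 𝓒 → C' ∈ 𝓒 → C ⊆ C' → C = C')
    (hC3 : ∀ C : Set α, C ∈ 𝓒 → ∀ X : Set α, X ⊆ C → ∀ Cfam : α → Set α,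
      (∀ x ∈ X, Cfam x ∈ 𝓒) →
      (∀ x ∈ X, ∀ y ∈ X, (x ∈ Cfam y ↔ x = y)) →
      ∀ z ∈ C \ ⋃ x ∈ X, Cfam x,
        ∃ C' ∈ 𝓒, z ∈ C' ∧ C' ⊆ (C ∪ ⋃ x ∈ X, Cfam x) \ X)
    (hCM : ∀ I X : Set α, I ⊆ X → CIndep 𝓒 I →
      ∃ J : Set α, Maximal (fun J : Set α => CIndep 𝓒 J ∧ I ⊆ J ∧ J ⊆ X) J)
    (B : Set α) (hB : Maximal (CIndep 𝓒) B) (e : α) (he : e ∉ B) :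
    ∀ C₁ C₂ : Set α, C₁ ∈ 𝓒 → C₂ ∈ 𝓒 →
      C₁ ⊆ insert e B → C₂ ⊆ insert e B → C₁ = C₂ := by
  intro C₁ C₂ h1 h2 hs1 hs2
  -- each circuit must contain e
  have he1 : e ∈ C₁ := by
    by_contra h
    exact hB.1 ⟨C₁, h1, fun x hx => (hs1 hx).resolve_left (fun hxe => h (hxe ▸ hx))⟩
  have he2 : e ∈ C₂ := by
    by_contra h
    exact hB.1 ⟨C₂, h2, fun x hx => (hs2 hx).resolve_left (fun hxe => h (hxe ▸ hx))⟩
  by_contra hne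
  -- pick z ∈ C₁ \ C₂
  have hns : ¬ C₁ ⊆ C₂ := fun hss => hne (hC2 _ _ h1 h2 hss)
  obtain ⟨z, hz1, hz2⟩ := not_subset.mp hns
  have hiU : ∀ s : Set α, (⋃ x ∈ ({e} : Set α), (fun _ => s) x) = s := by
    intro s; simp
  obtain ⟨C', hC', _, hsub⟩ := hC3 C₁ h1 {e} (by simpa using he1)
    (fun _ => C₂) (by simpa using h2)
    (by intro x hx y hy; simp at hx hy; subst hx; subst hy; simpa using he2)
    z (by rw [mem_diff, hiU]; exact ⟨hz1, hz2⟩)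
  rw [hiU] at hsub
  refine hB.1 ⟨C', hC', fun x hx => ?_⟩
  have := hsub hx
  rcases this.1 with h | h
  · exact (hs1 h).resolve_left (by simpa using this.2)
  · exact (hs2 h).resolve_left (by simpa using this.2)
end

section
/- For any (possibly infinite) matroid M on ground set E given by independence axioms (I1), (I2), (I3), (IM), the complements of the bases of M again satisfy (B1), (B2) and (BM); hence M has a dual matroid M* whose bases are exactly the complements of the bases of M. -/
open Set

variable {α : Type*}

private lemma dual_base_key (M : Matroid α) (B : Set α) :
    (∃ B₀ : Set α, M.IsBase B₀ ∧ B = M.E \ B₀) ↔ M✶.IsBase B := by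
  rw [Matroid.dual_isBase_iff']
  constructor
  · rintro ⟨B₀, hB₀, rfl⟩
    rw [diff_diff_cancel_left hB₀.subset_ground]
    exact ⟨hB₀, diff_subset⟩
  · rintro ⟨hB, hBE⟩
    exact ⟨M.E \ B, hB, (diff_diff_cancel_left hBE).symm⟩

/-- For a (possibly infinite) matroid `M` given by the independence axioms, the
complements (within the ground set) of the bases of `M` satisfy the basis axioms
(B1), (B2) and (BM); hence `M` has a dual matroid whose bases are exactly the
complements of the bases of `M`. -/
theorem dual_matroid_exists (M : Matroid α) :
    -- the collection of complements of bases
    (∃ B : Set α, (∃ B₀ : Set α, M.IsBase B₀ ∧ B = M.E \ B₀)) ∧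
    -- (B2): the exchange axiom for complements of bases
    (∀ B₁ B₂ : Set α,
      (∃ B₀ : Set α, M.IsBase B₀ ∧ B₁ = M.E \ B₀) →
      (∃ B₀ : Set α, M.IsBase B₀ ∧ B₂ = M.E \ B₀) →
      ∀ x ∈ B₁ \ B₂, ∃ y ∈ B₂ \ B₁,
        (∃ B₀ : Set α, M.IsBase B₀ ∧ insert y (B₁ \ {x}) = M.E \ B₀)) ∧
    -- (BM): the down-closure of the complements of bases satisfies the maximality axiom (M)
    (∀ I X : Set α, X ⊆ M.E → I ⊆ X →
      (∃ B : Set α, (∃ B₀ : Set α, M.IsBase B₀ ∧ B = M.E \ B₀) ∧ I ⊆ B) →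
      ∃ J : Set α, Maximal (fun J : Set α =>
        (∃ B : Set α, (∃ B₀ : Set α, M.IsBase B₀ ∧ B = M.E \ B₀) ∧ J ⊆ B) ∧
        I ⊆ J ∧ J ⊆ X) J) ∧
    -- hence there is a dual matroid whose bases are exactly the complements of bases of `M`
    (∃ M' : Matroid α, M'.E = M.E ∧
      ∀ B : Set α, M'.IsBase B ↔ ∃ B₀ : Set α, M.IsBase B₀ ∧ B = M.E \ B₀) := by
  refine ⟨?_, ?_, ?_, ?_⟩
  · obtain ⟨B, hB⟩ := M✶.exists_isBase
    exact ⟨B, (dual_base_key M B).2 hB⟩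
  · intro B₁ B₂ h₁ h₂ x hx
    obtain ⟨y, hy, hB⟩ :=
      ((dual_base_key M B₁).1 h₁).exchange ((dual_base_key M B₂).1 h₂) hx
    exact ⟨y, hy, (dual_base_key M _).2 hB⟩
  · intro I X hXE hIX hI
    have hIindep : M✶.Indep I := by
      obtain ⟨B, hB, hIB⟩ := hI
      exact ((dual_base_key M B).1 hB).indep.subset hIB
    obtain ⟨J, hIJ, hJ⟩ := M✶.maximality X (by rwa [Matroid.dual_ground]) I hIindep hIX
    refine ⟨J, ⟨?_, hIJ, hJ.1.2⟩, ?_⟩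
    · obtain ⟨B, hB, hJB⟩ := (show M✶.Indep J from hJ.1.1).exists_isBase_superset
      exact ⟨B, (dual_base_key M B).2 hB, hJB⟩
    · rintro K ⟨⟨B, hB, hKB⟩, -, hKX⟩ hJK
      exact hJ.2 ⟨((dual_base_key M B).1 hB).indep.subset hKB, hKX⟩ hJK
  · exact ⟨M✶, rfl, fun B => (dual_base_key M B).symm⟩
end
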